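/- arXiv:1112.1809 — 8 statements merged into one kernel-verified Lean document; each statement's English description precedes it below -/
import Mathlib

section
/- Let D be an oriented knot diagram with n ≥ 1 crossings, modeled by a Gauss code g. Then the warping polynomial and the warping crossing polynomial satisfy W_D(t) = (1 + t) · X_D(t) in ℤ[t]. -/
open Polynomial Finset

/-- An oriented knot diagram with `n` crossings, modeled by its oriented Gauss code. -/
structure GaussCode (n : ℕ) where
  g : ZMod (2 * n) → Fin n × Bool
  o : Fin n → ZMod (2 * n)
  u : Fin n → ZMod (2 * n)
  over_iff : ∀ (c : Fin n) (e : ZMod (2 * n)), g e = (c, true) ↔ e = o c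
  under_iff : ∀ (c : Fin n) (e : ZMod (2 * n)), g e = (c, false) ↔ e = u c

namespace GaussCode

variable {n : ℕ}

/-- The warping degree of the base position `e`: the number of crossings whose
under-passage occurs strictly before its over-passage when traversing the diagram
starting at `e`. -/
def d (D : GaussCode n) (e : ZMod (2 * n)) : ℕ :=
  (Finset.univ.filter fun c : Fin n => (D.u c - e).val < (D.o c - e).val).card

/-- The warping crossing polynomial. -/
noncomputable def Xpoly (D : GaussCode n) : Polynomial ℤ :=
  ∑ c : Fin n, Polynomial.X ^ D.d (D.o c)

/-- The warping polynomial. -/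
noncomputable def Wpoly (D : GaussCode n) : Polynomial ℤ :=
  ∑ k ∈ Finset.range (2 * n), Polynomial.X ^ D.d (k : ZMod (2 * n))

/-- The warping degree of the diagram: minimum over all base positions. -/
noncomputable def wdeg (D : GaussCode n) : ℕ :=
  sInf (Set.range fun e : ZMod (2 * n) => D.d e)

/-- The diagram is alternating. -/
def Alternating (D : GaussCode n) : Prop :=
  ∀ e : ZMod (2 * n), (D.g e).2 ≠ (D.g (e + 1)).2

end GaussCode

namespace GaussCode

variable {n : ℕ} (D : GaussCode n)

lemma g_o (c : Fin n) : D.g (D.o c) = (c, true) := (D.over_iff c _).mpr rfl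

lemma g_u (c : Fin n) : D.g (D.u c) = (c, false) := (D.under_iff c _).mpr rfl

lemma o_ne_u (c c' : Fin n) : D.o c ≠ D.u c' := by
  intro h
  have h1 := D.g_o c
  rw [h, D.g_u] at h1
  simp at h1

lemma o_injective : Function.Injective D.o := by
  intro a b h
  have h1 := D.g_o a
  rw [h, D.g_o] at h1
  simpa using h1.symm

lemma u_injective : Function.Injective D.u := by
  intro a b h
  have h1 := D.g_u a
  rw [h, D.g_u] at h1
  simpa using h1.symm

lemma eq_o_of_over {e : ZMod (2 * n)} (h : (D.g e).2 = true) : e = D.o (D.g e).1 := by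
  apply (D.over_iff _ _).mp
  rw [← h]

lemma eq_u_of_under {e : ZMod (2 * n)} (h : (D.g e).2 = false) : e = D.u (D.g e).1 := by
  apply (D.under_iff _ _).mp
  rw [← h]

lemma u_ne_of {c c' : Fin n} (h : c' ≠ c) : D.u c' ≠ D.o c := by
  intro he; exact D.o_ne_u c c' he.symm

/-- Auxiliary: in `ZMod N`, subtracting one decrements `val` when nonzero. -/
lemma zmod_val_sub_one {N : ℕ} [NeZero N] {a : ZMod N} (ha : a ≠ 0) :
    (a - 1).val = a.val - 1 := by
  have hv : a.val ≠ 0 := fun h => ha ((ZMod.val_eq_zero a).mp h)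
  have hlt : a.val < N := ZMod.val_lt a
  have key : a - 1 = (((a.val - 1 : ℕ)) : ZMod N) := by
    rw [Nat.cast_sub (Nat.one_le_iff_ne_zero.mpr hv), Nat.cast_one, ZMod.natCast_zmod_val]
  rw [key, ZMod.val_natCast, Nat.mod_eq_of_lt (by omega)]

lemma zmod_val_neg_one {N : ℕ} (hN : 0 < N) : (-1 : ZMod N).val = N - 1 := by
  obtain ⟨M, rfl⟩ := Nat.exists_eq_succ_of_ne_zero (Nat.pos_iff_ne_zero.mp hN)
  simp [ZMod.val_neg_one]

lemma zmod_val_lt_of_ne_neg_one {N : ℕ} [NeZero N] {a : ZMod N} (ha : a ≠ -1) :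
    a.val < N - 1 := by
  have hlt : a.val < N := ZMod.val_lt a
  have hne : a.val ≠ N - 1 := by
    intro h
    apply ha
    have : a = ((a.val : ℕ) : ZMod N) := (ZMod.natCast_zmod_val a).symm
    rw [this, h]
    have hN : 0 < N := Nat.pos_of_ne_zero (NeZero.ne N)
    have : ((N - 1 : ℕ) : ZMod N) = (N : ZMod N) - 1 := by
      push_cast [Nat.cast_sub hN]
      ring
    rw [this, ZMod.natCast_self, zero_sub]
  omega

lemma d_le (e : ZMod (2 * n)) : D.d e ≤ n := by
  unfold d
  calc _ ≤ (univ : Finset (Fin n)).card := Finset.card_filter_le _ _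
    _ = n := by simp

lemma d_o_add_one (hn : 0 < n) (c : Fin n) : D.d (D.o c + 1) = D.d (D.o c) + 1 := by
  haveI : NeZero (2 * n) := ⟨by omega⟩
  set e := D.o c with he
  have key : (univ.filter fun c' : Fin n => (D.u c' - (e + 1)).val < (D.o c' - (e + 1)).val)
      = insert c (univ.filter fun c' : Fin n => (D.u c' - e).val < (D.o c' - e).val) := by
    ext c'
    simp only [mem_filter, mem_insert, mem_univ, true_and]
    by_cases hc : c' = c
    · subst hc
      have h1 : D.o c' - (e + 1) = -1 := by rw [← he]; ring
      have h2 : D.u c' - (e + 1) ≠ -1 := by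
        intro h
        have : D.u c' = e := by linear_combination h - h1
        exact D.o_ne_u c' c' this.symm
      constructor
      · intro _; left; rfl
      · intro _
        rw [h1, zmod_val_neg_one (by omega)]
        exact zmod_val_lt_of_ne_neg_one h2
    · have hu : D.u c' - e ≠ 0 := by
        rw [sub_ne_zero]; exact D.u_ne_of hc
      have ho : D.o c' - e ≠ 0 := by
        rw [sub_ne_zero]; exact fun h => hc (D.o_injective h)
      have hu1 : (D.u c' - (e + 1)).val = (D.u c' - e).val - 1 := by
        rw [show D.u c' - (e + 1) = (D.u c' - e) - 1 by ring]
        exact zmod_val_sub_one hu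
      have ho1 : (D.o c' - (e + 1)).val = (D.o c' - e).val - 1 := by
        rw [show D.o c' - (e + 1) = (D.o c' - e) - 1 by ring]
        exact zmod_val_sub_one ho
      have hu0 : (D.u c' - e).val ≠ 0 := fun h => hu ((ZMod.val_eq_zero _).mp h)
      have ho0 : (D.o c' - e).val ≠ 0 := fun h => ho ((ZMod.val_eq_zero _).mp h)
      rw [hu1, ho1]
      constructor
      · intro h; right; omega
      · rintro (h | h)
        · exact absurd h hc
        · omega
  have hcnot : c ∉ (univ.filter fun c' : Fin n => (D.u c' - e).val < (D.o c' - e).val) := by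
    simp only [mem_filter, mem_univ, true_and, not_lt]
    rw [show D.o c - e = 0 by rw [he]; ring]
    simp [Nat.zero_le]
  show _ = _
  unfold d
  rw [key, Finset.card_insert_of_notMem hcnot]

lemma d_u_eq (hn : 0 < n) (c : Fin n) : D.d (D.u c) = D.d (D.u c + 1) + 1 := by
  haveI : NeZero (2 * n) := ⟨by omega⟩
  set e := D.u c with he
  have key : (univ.filter fun c' : Fin n => (D.u c' - e).val < (D.o c' - e).val)
      = insert c (univ.filter fun c' : Fin n => (D.u c' - (e + 1)).val < (D.o c' - (e + 1)).val) := by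
    ext c'
    simp only [mem_filter, mem_insert, mem_univ, true_and]
    by_cases hc : c' = c
    · subst hc
      constructor
      · intro _; left; rfl
      · intro _
        rw [show D.u c' - e = 0 by rw [he]; ring]
        simp only [ZMod.val_zero]
        have : D.o c' - e ≠ 0 := by
          rw [sub_ne_zero, he]; exact D.o_ne_u c' c'
        exact Nat.pos_of_ne_zero fun h => this ((ZMod.val_eq_zero _).mp h)
    · have hu : D.u c' - e ≠ 0 := by
        rw [sub_ne_zero, he]; exact fun h => hc (D.u_injective h)
      have ho : D.o c' - e ≠ 0 := by
        rw [sub_ne_zero, he]; exact D.o_ne_u c' c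
      have hu1 : (D.u c' - (e + 1)).val = (D.u c' - e).val - 1 := by
        rw [show D.u c' - (e + 1) = (D.u c' - e) - 1 by ring]
        exact zmod_val_sub_one hu
      have ho1 : (D.o c' - (e + 1)).val = (D.o c' - e).val - 1 := by
        rw [show D.o c' - (e + 1) = (D.o c' - e) - 1 by ring]
        exact zmod_val_sub_one ho
      have hu0 : (D.u c' - e).val ≠ 0 := fun h => hu ((ZMod.val_eq_zero _).mp h)
      have ho0 : (D.o c' - e).val ≠ 0 := fun h => ho ((ZMod.val_eq_zero _).mp h)
      rw [hu1, ho1]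
      constructor
      · intro h; right; omega
      · rintro (h | h)
        · exact absurd h hc
        · omega
  have hcnot : c ∉ (univ.filter fun c' : Fin n =>
      (D.u c' - (e + 1)).val < (D.o c' - (e + 1)).val) := by
    simp only [mem_filter, mem_univ, true_and, not_lt]
    have h1 : D.u c - (e + 1) = -1 := by rw [he]; ring
    rw [h1, zmod_val_neg_one (by omega)]
    have := ZMod.val_lt (D.o c - (e + 1))
    omega
  show _ = _
  unfold d
  rw [key, Finset.card_insert_of_notMem hcnot]

lemma d_step (hn : 0 < n) (e : ZMod (2 * n)) :
    (∃ c, e = D.o c ∧ D.d (e + 1) = D.d e + 1) ∨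
    (∃ c, e = D.u c ∧ D.d e = D.d (e + 1) + 1) := by
  rcases hb : (D.g e).2 with _ | _
  · right
    have he : e = D.u (D.g e).1 := D.eq_u_of_under hb
    exact ⟨(D.g e).1, he, by rw [he]; exact D.d_u_eq hn _⟩
  · left
    have he : e = D.o (D.g e).1 := D.eq_o_of_over hb
    exact ⟨(D.g e).1, he, by rw [he]; exact D.d_o_add_one hn _⟩

lemma one_le_d_u (hn : 0 < n) (c : Fin n) : 1 ≤ D.d (D.u c) := by
  haveI : NeZero (2 * n) := ⟨by omega⟩
  apply Finset.card_pos.mpr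
  refine ⟨c, ?_⟩
  simp only [mem_filter, mem_univ, true_and]
  rw [show D.u c - D.u c = 0 by ring]
  simp only [ZMod.val_zero]
  have : D.o c - D.u c ≠ 0 := by rw [sub_ne_zero]; exact D.o_ne_u c c
  exact Nat.pos_of_ne_zero fun h => this ((ZMod.val_eq_zero _).mp h)

lemma count_eq (hn : 0 < n) (m : ℕ) :
    (univ.filter fun c : Fin n => D.d (D.u c) = m + 1).card
      = (univ.filter fun c : Fin n => D.d (D.o c) = m).card := by
  classical
  haveI : NeZero (2 * n) := ⟨by omega⟩
  set S : Finset (ZMod (2 * n)) := univ.filter fun e => m + 1 ≤ D.d e with hS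
  set T : Finset (ZMod (2 * n)) := univ.filter fun e => m + 1 ≤ D.d (e + 1) with hT
  have hmemS : ∀ e : ZMod (2 * n), e ∈ S ↔ m + 1 ≤ D.d e := by
    intro e; simp [hS]
  have hmemT : ∀ e : ZMod (2 * n), e ∈ T ↔ m + 1 ≤ D.d (e + 1) := by
    intro e; simp [hT]
  have hST : T.card = S.card := by
    refine Finset.card_bij' (fun e _ => e + 1) (fun e _ => e - 1) ?_ ?_ ?_ ?_
    · intro a ha; rw [hmemS]; rw [hmemT] at ha; exact ha
    · intro a ha
      rw [hmemT]
      rw [hmemS] at ha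
      have h : a - 1 + 1 = a := by ring
      rw [h]; exact ha
    · intro a _; ring
    · intro a _; ring
  have h1 : (univ.filter fun c : Fin n => D.d (D.u c) = m + 1).card = (S \ T).card := by
    apply Finset.card_bij (fun c _ => D.u c)
    · intro c hc
      simp only [mem_filter, mem_univ, true_and] at hc
      have hd := D.d_u_eq hn c
      rw [Finset.mem_sdiff, hmemS, hmemT]
      omega
    · intro a _ b _ h; exact D.u_injective h
    · intro e he
      rw [Finset.mem_sdiff, hmemS, hmemT] at he
      obtain ⟨h1, h2⟩ := he
      rcases D.d_step hn e with ⟨c, hc, hd⟩ | ⟨c, hc, hd⟩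
      · omega
      · refine ⟨c, ?_, hc.symm⟩
        simp only [mem_filter, mem_univ, true_and]
        rw [← hc]; omega
  have h2 : (univ.filter fun c : Fin n => D.d (D.o c) = m).card = (T \ S).card := by
    apply Finset.card_bij (fun c _ => D.o c)
    · intro c hc
      simp only [mem_filter, mem_univ, true_and] at hc
      have hd := D.d_o_add_one hn c
      rw [Finset.mem_sdiff, hmemS, hmemT]
      omega
    · intro a _ b _ h; exact D.o_injective h
    · intro e he
      rw [Finset.mem_sdiff, hmemT, hmemS] at he
      obtain ⟨h1, h2⟩ := he
      rcases D.d_step hn e with ⟨c, hc, hd⟩ | ⟨c, hc, hd⟩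
      · refine ⟨c, ?_, hc.symm⟩
        simp only [mem_filter, mem_univ, true_and]
        rw [← hc]; omega
      · omega
  rw [h1, h2]
  have e1 := Finset.card_sdiff_add_card_inter S T
  have e2 := Finset.card_sdiff_add_card_inter T S
  rw [Finset.inter_comm] at e2
  omega

lemma sum_pow_X (f : Fin n → ℕ) (M : ℕ) (hf : ∀ c, f c < M) :
    ∑ c : Fin n, (Polynomial.X : Polynomial ℤ) ^ f c
      = ∑ m ∈ Finset.range M,
          (univ.filter fun c => f c = m).card • (Polynomial.X : Polynomial ℤ) ^ m := by
  have h1 : ∀ c : Fin n, (Polynomial.X : Polynomial ℤ) ^ f c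
      = ∑ m ∈ Finset.range M, if f c = m then (Polynomial.X : Polynomial ℤ) ^ m else 0 := by
    intro c
    rw [Finset.sum_ite_eq (Finset.range M) (f c) (fun m => (Polynomial.X : Polynomial ℤ) ^ m)]
    simp [Finset.mem_range.mpr (hf c)]
  simp_rw [h1]
  rw [Finset.sum_comm]
  refine Finset.sum_congr rfl fun m _ => ?_
  rw [← Finset.sum_filter, Finset.sum_const]

end GaussCode

/-- **Theorem (Shimizu).** For a knot diagram with `n ≥ 1` crossings,
`W_D(t) = (1 + t) ⬝ X_D(t)`. -/
theorem warping_poly_eq_one_add_X_mul_warping_crossing_poly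
    (n : ℕ) (hn : 1 ≤ n) (D : GaussCode n) :
    D.Wpoly = (1 + Polynomial.X) * D.Xpoly := by
  classical
  haveI : NeZero (2 * n) := ⟨by omega⟩
  have hn0 : 0 < n := hn
  -- Rewrite Wpoly as a sum over all of `ZMod (2*n)`.
  have hW : D.Wpoly = ∑ e : ZMod (2 * n), (Polynomial.X : Polynomial ℤ) ^ D.d e := by
    unfold GaussCode.Wpoly
    refine Finset.sum_bij (fun k _ => (k : ZMod (2 * n))) ?_ ?_ ?_ ?_
    · intro k _; exact Finset.mem_univ _
    · intro a ha b hb h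
      rw [Finset.mem_range] at ha hb
      have := congrArg ZMod.val h
      rwa [ZMod.val_cast_of_lt ha, ZMod.val_cast_of_lt hb] at this
    · intro e _
      exact ⟨e.val, Finset.mem_range.mpr (ZMod.val_lt e), ZMod.natCast_zmod_val e⟩
    · intro k _; rfl
  -- Split the sum into over-positions and under-positions.
  have hsplit := Finset.sum_filter_add_sum_filter_not (Finset.univ : Finset (ZMod (2 * n)))
    (fun e => (D.g e).2 = true) (fun e => (Polynomial.X : Polynomial ℤ) ^ D.d e)
  have hover : ∑ e ∈ Finset.univ.filter (fun e : ZMod (2 * n) => (D.g e).2 = true),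
      (Polynomial.X : Polynomial ℤ) ^ D.d e = D.Xpoly := by
    unfold GaussCode.Xpoly
    symm
    apply Finset.sum_bij (fun c _ => D.o c)
    · intro c _
      simp only [Finset.mem_filter, Finset.mem_univ, true_and]
      rw [D.g_o]
    · intro a _ b _ h; exact D.o_injective h
    · intro e he
      simp only [Finset.mem_filter, Finset.mem_univ, true_and] at he
      exact ⟨(D.g e).1, Finset.mem_univ _, (D.eq_o_of_over he).symm⟩
    · intro c _; rfl
  have hunder : ∑ e ∈ Finset.univ.filter (fun e : ZMod (2 * n) => ¬(D.g e).2 = true),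
      (Polynomial.X : Polynomial ℤ) ^ D.d e
      = ∑ c : Fin n, (Polynomial.X : Polynomial ℤ) ^ D.d (D.u c) := by
    symm
    apply Finset.sum_bij (fun c _ => D.u c)
    · intro c _
      simp only [Finset.mem_filter, Finset.mem_univ, true_and]
      rw [D.g_u]
      simp
    · intro a _ b _ h; exact D.u_injective h
    · intro e he
      simp only [Finset.mem_filter, Finset.mem_univ, true_and, Bool.not_eq_true] at he
      exact ⟨(D.g e).1, Finset.mem_univ _, (D.eq_u_of_under he).symm⟩
    · intro c _; rfl
  -- The under-sum equals `X * Xpoly`.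
  have hXX : ∑ c : Fin n, (Polynomial.X : Polynomial ℤ) ^ D.d (D.u c)
      = Polynomial.X * D.Xpoly := by
    unfold GaussCode.Xpoly
    rw [Finset.mul_sum]
    have hrhs : ∀ c : Fin n, Polynomial.X * (Polynomial.X : Polynomial ℤ) ^ D.d (D.o c)
        = (Polynomial.X : Polynomial ℤ) ^ (D.d (D.o c) + 1) := by
      intro c; rw [pow_succ, mul_comm]
    simp_rw [hrhs]
    rw [GaussCode.sum_pow_X (fun c => D.d (D.u c)) (n + 2)
      (fun c => by show D.d (D.u c) < n + 2; have := D.d_le (D.u c); omega)]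
    rw [GaussCode.sum_pow_X (fun c => D.d (D.o c) + 1) (n + 2)
      (fun c => by show D.d (D.o c) + 1 < n + 2; have := D.d_le (D.o c); omega)]
    refine Finset.sum_congr rfl fun m _ => ?_
    congr 1
    match m with
    | 0 =>
      have h1 : (Finset.univ.filter fun c : Fin n => D.d (D.u c) = 0) = ∅ := by
        apply Finset.filter_false_of_mem
        intro c _
        have := D.one_le_d_u hn0 c
        omega
      have h2 : (Finset.univ.filter fun c : Fin n => D.d (D.o c) + 1 = 0) = ∅ := by
        apply Finset.filter_false_of_mem
        intro c _
        omega
      rw [h1, h2]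
    | m + 1 =>
      rw [D.count_eq hn0 m]
      congr 1
      apply Finset.filter_congr
      intro c _
      simp only [eq_iff_iff, Nat.add_right_cancel_iff]
  rw [hW, ← hsplit, hover, hunder, hXX]
  ring
end

section
/- Let D be an oriented knot diagram with n ≥ 1 crossings, modeled by a Gauss code g, and let e : ZMod (2*n) be any position. If the passage at position e is an under-passage (i.e., (g e).2 = false) then d (e+1) = d e − 1, and if it is an over-passage (i.e., (g e).2 = true) then d (e+1) = d e + 1. In particular the warping degrees of consecutive edges differ by exactly 1. -/
open Polynomial Finset

private lemma zmod_sub_one_val {N : ℕ} [NeZero N] (a : ZMod N) (h : a ≠ 0) :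
    (a - 1).val = a.val - 1 := by
  have hv : a.val ≠ 0 := fun hv => h ((ZMod.val_eq_zero a).1 hv)
  have hlt : a.val - 1 < N := lt_of_le_of_lt (Nat.sub_le _ _) (ZMod.val_lt a)
  have : a - 1 = ((a.val - 1 : ℕ) : ZMod N) := by
    have := ZMod.natCast_val (R := ZMod N) a
    rw [ZMod.cast_id] at this
    rw [Nat.cast_sub (by omega), this, Nat.cast_one]
  rw [this, ZMod.val_cast_of_lt hlt]

private lemma zmod_neg_one_val {N : ℕ} (hN : 0 < N) : (-1 : ZMod N).val = N - 1 := by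
  obtain ⟨m, rfl⟩ := Nat.exists_eq_succ_of_ne_zero hN.ne'
  simp [ZMod.val_neg_one m]


/-- The warping degrees of consecutive edges differ by exactly one: it drops by one
after an under-passage and rises by one after an over-passage. -/
theorem warping_degree_succ
    (n : ℕ) (hn : 1 ≤ n) (D : GaussCode n) (e : ZMod (2 * n)) :
    ((D.g e).2 = false → D.d (e + 1) + 1 = D.d e) ∧
    ((D.g e).2 = true → D.d (e + 1) = D.d e + 1) := by
  haveI : NeZero (2 * n) := ⟨by omega⟩
  have hN : 0 < 2 * n := by omega
  set c₀ := (D.g e).1 with hc₀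
  have shift : ∀ x : ZMod (2 * n), x - (e + 1) = (x - e) - 1 := fun x => by ring
  -- generic crossings
  have generic : ∀ c : Fin n, c ≠ c₀ →
      (((D.u c - (e + 1)).val < (D.o c - (e + 1)).val) ↔
        ((D.u c - e).val < (D.o c - e).val)) := by
    intro c hc
    have hu : D.u c - e ≠ 0 := by
      intro h0
      have : e = D.u c := by linear_combination (norm := ring_nf) -h0
      have hgc := (D.under_iff c e).2 this
      exact hc (by rw [hc₀, hgc])
    have ho : D.o c - e ≠ 0 := by
      intro h0
      have : e = D.o c := by linear_combination (norm := ring_nf) -h0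
      have hgc := (D.over_iff c e).2 this
      exact hc (by rw [hc₀, hgc])
    have hu' : (D.u c - e).val ≠ 0 := fun h => hu ((ZMod.val_eq_zero _).1 h)
    have ho' : (D.o c - e).val ≠ 0 := fun h => ho ((ZMod.val_eq_zero _).1 h)
    rw [shift, shift, zmod_sub_one_val _ hu, zmod_sub_one_val _ ho]
    omega
  constructor
  · intro hund
    have hge : D.g e = (c₀, false) := by rw [hc₀, ← hund]
    have heu : e = D.u c₀ := (D.under_iff c₀ e).1 hge
    have ho : D.o c₀ - e ≠ 0 := by
      intro h0
      have : e = D.o c₀ := by linear_combination (norm := ring_nf) -h0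
      have := (D.over_iff c₀ e).2 this
      rw [hge] at this; simp at this
    have huv : (D.u c₀ - e).val = 0 := by rw [← heu]; simp
    have hov : (D.o c₀ - e).val ≠ 0 := fun h => ho ((ZMod.val_eq_zero _).1 h)
    have hset : (Finset.univ.filter fun c : Fin n => (D.u c - e).val < (D.o c - e).val)
        = insert c₀ (Finset.univ.filter fun c : Fin n =>
            (D.u c - (e + 1)).val < (D.o c - (e + 1)).val) := by
      ext c
      by_cases hc : c = c₀
      · subst hc
        constructor
        · intro _; exact Finset.mem_insert_self _ _
        · intro _
          rw [Finset.mem_filter]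
          exact ⟨Finset.mem_univ _, by omega⟩
      · simp only [Finset.mem_insert, Finset.mem_filter, Finset.mem_univ, true_and, hc,
          false_or]
        exact (generic c hc).symm
    have hnotin : c₀ ∉ (Finset.univ.filter fun c : Fin n =>
        (D.u c - (e + 1)).val < (D.o c - (e + 1)).val) := by
      simp only [Finset.mem_filter, Finset.mem_univ, true_and, not_lt]
      rw [shift, shift]
      have h1 : (D.u c₀ - e - 1).val = 2 * n - 1 := by
        rw [← heu]; simp only [sub_self, zero_sub]; exact zmod_neg_one_val hN
      have h2 : (D.o c₀ - e - 1).val = (D.o c₀ - e).val - 1 := zmod_sub_one_val _ ho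
      have := ZMod.val_lt (D.o c₀ - e)
      omega
    rw [GaussCode.d, GaussCode.d, hset, Finset.card_insert_of_notMem hnotin]
  · intro hov
    have hge : D.g e = (c₀, true) := by rw [hc₀, ← hov]
    have heo : e = D.o c₀ := (D.over_iff c₀ e).1 hge
    have hu : D.u c₀ - e ≠ 0 := by
      intro h0
      have : e = D.u c₀ := by linear_combination (norm := ring_nf) -h0
      have := (D.under_iff c₀ e).2 this
      rw [hge] at this; simp at this
    have hset : (Finset.univ.filter fun c : Fin n =>
          (D.u c - (e + 1)).val < (D.o c - (e + 1)).val)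
        = insert c₀ (Finset.univ.filter fun c : Fin n =>
            (D.u c - e).val < (D.o c - e).val) := by
      ext c
      by_cases hc : c = c₀
      · subst hc
        constructor
        · intro _; exact Finset.mem_insert_self _ _
        · intro _
          rw [Finset.mem_filter]
          refine ⟨Finset.mem_univ _, ?_⟩
          rw [shift, shift]
          have h1 : (D.o c₀ - e - 1).val = 2 * n - 1 := by
            rw [← heo]; simp only [sub_self, zero_sub]; exact zmod_neg_one_val hN
          have h2 : (D.u c₀ - e - 1).val = (D.u c₀ - e).val - 1 := zmod_sub_one_val _ hu
          have h3 := ZMod.val_lt (D.u c₀ - e)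
          have h4 : (D.u c₀ - e).val ≠ 0 := fun h => hu ((ZMod.val_eq_zero _).1 h)
          omega
      · simp only [Finset.mem_insert, Finset.mem_filter, Finset.mem_univ, true_and, hc,
          false_or]
        exact generic c hc
    have hnotin : c₀ ∉ (Finset.univ.filter fun c : Fin n =>
        (D.u c - e).val < (D.o c - e).val) := by
      simp only [Finset.mem_filter, Finset.mem_univ, true_and, not_lt]
      rw [← heo]; simp
    rw [GaussCode.d, GaussCode.d, hset, Finset.card_insert_of_notMem hnotin]
end

section
/- Let P be a knot projection with n ≥ 1 crossings. Then the state sum of the warping crossing polynomials over all 2^n states of P satisfies Z_P(t) = 2n(1 + t)^(n−1) in ℤ[t]. -/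
open Polynomial Finset
open scoped Classical

/-- `g` is an oriented Gauss code with `n` crossings: each crossing has exactly one
over-passage and exactly one under-passage. -/
def IsGaussCode (n : ℕ) (g : ZMod (2 * n) → Fin n × Bool) : Prop :=
  ∀ c : Fin n, (∃! e, g e = (c, true)) ∧ (∃! e, g e = (c, false))

/-- The warping degree of the base position `e` of the code `g`: the number of crossings
whose under-passage occurs strictly before its over-passage in the list
`e, e+1, …, e+2n−1`. -/

noncomputable def dRaw (n : ℕ) (g : ZMod (2 * n) → Fin n × Bool) (e : ZMod (2 * n)) : ℕ :=
  (Finset.univ.filter fun c : Fin n =>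
    ∃ j ∈ Finset.range (2 * n), ∃ k ∈ Finset.range (2 * n),
      j < k ∧ g (e + (j : ZMod (2 * n))) = (c, false)
            ∧ g (e + (k : ZMod (2 * n))) = (c, true)).card

/-- The warping crossing polynomial of the code `g`: the sum of the crossing weights
`t^(d (o c))` over all crossings `c`, i.e. the sum of `t^(d e)` over all over-passage
positions `e`. -/
noncomputable def XRaw (n : ℕ) (g : ZMod (2 * n) → Fin n × Bool) : Polynomial ℤ :=
  ∑ k ∈ Finset.range (2 * n),
    if (g (k : ZMod (2 * n))).2 = true
    then (Polynomial.X : Polynomial ℤ) ^ dRaw n g (k : ZMod (2 * n)) else 0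

/-- The warping polynomial of the code `g`: the sum of `t^(d e)` over all positions. -/
noncomputable def WRaw (n : ℕ) (g : ZMod (2 * n) → Fin n × Bool) : Polynomial ℤ :=
  ∑ k ∈ Finset.range (2 * n), (Polynomial.X : Polynomial ℤ) ^ dRaw n g (k : ZMod (2 * n))

/-- `p` is a knot projection with `n` crossings: every crossing has exactly two
preimage positions. -/
def IsProjection (n : ℕ) (p : ZMod (2 * n) → Fin n) : Prop :=
  ∀ c : Fin n, ∃ e₁ e₂ : ZMod (2 * n), e₁ ≠ e₂ ∧ ∀ e, p e = c ↔ e = e₁ ∨ e = e₂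

/-- The finset of all states of the projection `p`: Gauss codes obtained from `p` by
giving each crossing over/under information. -/

noncomputable def statesFinset (n : ℕ) (hn : 1 ≤ n) (p : ZMod (2 * n) → Fin n) :
    Finset (ZMod (2 * n) → Fin n × Bool) :=
  haveI : NeZero (2 * n) := ⟨by omega⟩
  Finset.univ.filter fun g => IsGaussCode n g ∧ ∀ e, (g e).1 = p e

namespace StateSumAux

variable {n : ℕ}

/-- The state of the projection `p` determined by the choice `b` of over-positions. -/
def Gb (p : ZMod (2 * n) → Fin n) (E₁ : Fin n → ZMod (2 * n)) (b : Fin n → Bool)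
    (e : ZMod (2 * n)) : Fin n × Bool :=
  (p e, if e = E₁ (p e) then b (p e) else !b (p e))

section

variable {p : ZMod (2 * n) → Fin n} {E₁ E₂ : Fin n → ZMod (2 * n)}
  (hE : ∀ c, E₁ c ≠ E₂ c ∧ ∀ e, p e = c ↔ e = E₁ c ∨ e = E₂ c)

include hE

lemma pE₁ (c : Fin n) : p (E₁ c) = c := ((hE c).2 _).mpr (Or.inl rfl)
lemma pE₂ (c : Fin n) : p (E₂ c) = c := ((hE c).2 _).mpr (Or.inr rfl)

lemma Gb_apply_E₁ (b : Fin n → Bool) (c : Fin n) : Gb p E₁ b (E₁ c) = (c, b c) := by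
  simp [Gb, pE₁ hE]

lemma Gb_apply_E₂ (b : Fin n → Bool) (c : Fin n) : Gb p E₁ b (E₂ c) = (c, !b c) := by
  have h1 : p (E₂ c) = c := pE₂ hE c
  have h2 : E₂ c ≠ E₁ c := Ne.symm (hE c).1
  simp [Gb, h1, h2]

lemma mem_pair {e : ZMod (2 * n)} {c : Fin n} (h : p e = c) : e = E₁ c ∨ e = E₂ c :=
  ((hE c).2 e).mp h

omit hE in
lemma Gb_fst (b : Fin n → Bool) (e : ZMod (2 * n)) : (Gb p E₁ b e).1 = p e := rfl

lemma Gb_gauss (b : Fin n → Bool) : IsGaussCode n (Gb p E₁ b) := by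
  intro c
  have h1 := Gb_apply_E₁ hE b c
  have h2 := Gb_apply_E₂ hE b c
  constructor
  · refine ⟨if b c then E₁ c else E₂ c, ?_, ?_⟩
    · cases hb : b c <;> simp [hb, h1, h2]
    · intro e he
      have hfst : p e = c := by
        have := congrArg Prod.fst he; simpa [Gb] using this
      rcases mem_pair hE hfst with h | h <;> subst h
      · have : b c = true := by
          have := h1.symm.trans he; exact (Prod.mk.injEq _ _ _ _ ▸ this).2
        simp [this]
      · have : (!b c) = true := by
          have := h2.symm.trans he; exact (Prod.mk.injEq _ _ _ _ ▸ this).2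
        have hb : b c = false := by simpa using this
        simp [hb]
  · refine ⟨if b c then E₂ c else E₁ c, ?_, ?_⟩
    · cases hb : b c <;> simp [hb, h1, h2]
    · intro e he
      have hfst : p e = c := by
        have := congrArg Prod.fst he; simpa [Gb] using this
      rcases mem_pair hE hfst with h | h <;> subst h
      · have : b c = false := by
          have := h1.symm.trans he; exact (Prod.mk.injEq _ _ _ _ ▸ this).2
        simp [this]
      · have : (!b c) = false := by
          have := h2.symm.trans he; exact (Prod.mk.injEq _ _ _ _ ▸ this).2
        have hb : b c = true := by simpa using this
        simp [hb]

lemma Gb_injective : Function.Injective (Gb p E₁) := by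
  intro b b' h
  funext c
  have := congrArg (fun g => (g (E₁ c)).2) h
  simpa [Gb_apply_E₁ hE] using this

/-- Every state arises from a unique `b`. -/
lemma state_eq_Gb {g : ZMod (2 * n) → Fin n × Bool} (hg : IsGaussCode n g)
    (hfst : ∀ e, (g e).1 = p e) : g = Gb p E₁ (fun c => (g (E₁ c)).2) := by
  have hg1 : ∀ c, g (E₁ c) = (c, (g (E₁ c)).2) := fun c =>
    Prod.ext (by rw [hfst, pE₁ hE]) rfl
  have hg2 : ∀ c, g (E₂ c) = (c, (g (E₂ c)).2) := fun c =>
    Prod.ext (by rw [hfst, pE₂ hE]) rfl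
  have key : ∀ c, (g (E₂ c)).2 = !(g (E₁ c)).2 := by
    intro c
    by_contra hne
    have heq : (g (E₂ c)).2 = (g (E₁ c)).2 := by
      cases h1 : (g (E₁ c)).2 <;> cases h2 : (g (E₂ c)).2 <;> simp [h1, h2] at hne ⊢
    cases h1 : (g (E₁ c)).2 with
    | true =>
      obtain ⟨eo, -, huniq⟩ := (hg c).1
      have e1 : E₁ c = eo := huniq (E₁ c) (by show g (E₁ c) = (c, true); rw [hg1 c, h1])
      have e2 : E₂ c = eo := huniq (E₂ c) (by show g (E₂ c) = (c, true); rw [hg2 c, heq, h1])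
      exact (hE c).1 (e1.trans e2.symm)
    | false =>
      obtain ⟨eu, -, huniq⟩ := (hg c).2
      have e1 : E₁ c = eu := huniq (E₁ c) (by show g (E₁ c) = (c, false); rw [hg1 c, h1])
      have e2 : E₂ c = eu := huniq (E₂ c) (by show g (E₂ c) = (c, false); rw [hg2 c, heq, h1])
      exact (hE c).1 (e1.trans e2.symm)
  funext e
  apply Prod.ext
  · exact hfst e
  · show (g e).2 = if e = E₁ (p e) then (g (E₁ (p e))).2 else !(g (E₁ (p e))).2
    rcases mem_pair hE (rfl : p e = p e) with h' | h'
    · rw [if_pos h', ← h']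
    · have hE1 : e ≠ E₁ (p e) := fun hcon => (hE (p e)).1 (hcon.symm.trans h')
      rw [if_neg hE1, ← key (p e)]
      exact congrArg (fun x => (g x).2) h'

omit hE in
lemma add_off [NeZero (2 * n)] (e x : ZMod (2 * n)) :
    e + (((x - e).val : ℕ) : ZMod (2 * n)) = x := by
  rw [ZMod.natCast_val, ZMod.cast_id]; ring

omit hE in
lemma off_eq [NeZero (2 * n)] {e x : ZMod (2 * n)} {j : ℕ} (hj : j < 2 * n)
    (h : e + (j : ZMod (2 * n)) = x) : j = (x - e).val := by
  have h2 : (j : ZMod (2 * n)) = x - e := by rw [← h]; ring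
  rw [← ZMod.val_cast_of_lt hj, h2]

lemma dRaw_Gb [NeZero (2 * n)] (b : Fin n → Bool) (e : ZMod (2 * n)) :
    dRaw n (Gb p E₁ b) e =
      (univ.filter fun c => b c = decide ((E₂ c - e).val < (E₁ c - e).val)).card := by
  unfold dRaw
  congr 1
  ext c
  simp only [Finset.mem_filter, Finset.mem_univ, true_and]
  constructor
  · rintro ⟨j, hj, k, hk, hjk, hu, ho⟩
    rw [Finset.mem_range] at hj hk
    have hpj : p (e + (j : ZMod (2 * n))) = c := by
      have := congrArg Prod.fst hu; simpa [Gb] using this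
    have hpk : p (e + (k : ZMod (2 * n))) = c := by
      have := congrArg Prod.fst ho; simpa [Gb] using this
    rcases mem_pair hE hpj with h1 | h1
    · have hbc : b c = false := by
        rw [h1, Gb_apply_E₁ hE] at hu
        simpa using congrArg Prod.snd hu
      rcases mem_pair hE hpk with h2 | h2
      · exfalso
        rw [h2, Gb_apply_E₁ hE] at ho
        have : b c = true := by simpa using congrArg Prod.snd ho
        simp [hbc] at this
      · have hj' := off_eq hj h1
        have hk' := off_eq hk h2
        have hlt : ¬ ((E₂ c - e).val < (E₁ c - e).val) := by omega
        simp [hbc, hlt]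
    · have hbc : b c = true := by
        rw [h1, Gb_apply_E₂ hE] at hu
        simpa using congrArg Prod.snd hu
      rcases mem_pair hE hpk with h2 | h2
      · have hj' := off_eq hj h1
        have hk' := off_eq hk h2
        have hlt : (E₂ c - e).val < (E₁ c - e).val := by omega
        simp [hbc, hlt]
      · exfalso
        rw [h2, Gb_apply_E₂ hE] at ho
        have : b c = false := by simpa using congrArg Prod.snd ho
        simp [hbc] at this
  · intro hcond
    have hne : (E₁ c - e).val ≠ (E₂ c - e).val := by
      intro hcon
      apply (hE c).1
      rw [← add_off e (E₁ c), ← add_off e (E₂ c), hcon]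
    cases hb : b c with
    | true =>
      have hlt : (E₂ c - e).val < (E₁ c - e).val := by
        rw [hb] at hcond
        exact of_decide_eq_true hcond.symm
      refine ⟨(E₂ c - e).val, Finset.mem_range.mpr (ZMod.val_lt _),
        (E₁ c - e).val, Finset.mem_range.mpr (ZMod.val_lt _), hlt, ?_, ?_⟩
      · rw [add_off, Gb_apply_E₂ hE, hb]; rfl
      · rw [add_off, Gb_apply_E₁ hE, hb]
    | false =>
      have hlt : (E₁ c - e).val < (E₂ c - e).val := by
        rw [hb] at hcond
        have := of_decide_eq_false hcond.symm
        omega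
      refine ⟨(E₁ c - e).val, Finset.mem_range.mpr (ZMod.val_lt _),
        (E₂ c - e).val, Finset.mem_range.mpr (ZMod.val_lt _), hlt, ?_, ?_⟩
      · rw [add_off, Gb_apply_E₁ hE, hb]
      · rw [add_off, Gb_apply_E₂ hE, hb]; rfl

lemma inner_sum [NeZero (2 * n)] (e : ZMod (2 * n)) :
    ∑ b : Fin n → Bool,
        (if (Gb p E₁ b e).2 = true
          then (Polynomial.X : Polynomial ℤ) ^
            (univ.filter fun c => b c = decide ((E₂ c - e).val < (E₁ c - e).val)).card
          else 0)
      = (1 + Polynomial.X) ^ (n - 1) := by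
  set c₀ := p e with hc₀
  set v : Bool := decide (e = E₁ c₀) with hv
  set w : Fin n → Bool := fun c => decide ((E₂ c - e).val < (E₁ c - e).val) with hw
  have hcov : ∀ b : Fin n → Bool, ((Gb p E₁ b e).2 = true ↔ b c₀ = v) := by
    intro b
    show (if e = E₁ (p e) then b (p e) else !b (p e)) = true ↔ _
    have hpe : p e = c₀ := rfl
    rw [hpe]
    by_cases h : e = E₁ c₀
    · rw [if_pos h]; simp [hv, h]
    · rw [if_neg h]; simp [hv, h]
  have hvw : v ≠ w c₀ := by
    by_cases h : e = E₁ c₀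
    · have h1 : (E₁ c₀ - e).val = 0 := by rw [← h]; simp
      simp [hv, hw, h, h1]
    · have h2 : e = E₂ c₀ := (mem_pair hE hc₀.symm).resolve_left h
      have h1 : (E₂ c₀ - e).val = 0 := by rw [← h2]; simp
      have h3 : (E₁ c₀ - e).val ≠ 0 := by
        intro hcon
        apply h
        have h4 := add_off e (E₁ c₀)
        rw [hcon] at h4
        exact (by simpa using h4.symm : E₁ c₀ = e).symm
      have h5 : 0 < (E₁ c₀ - e).val := Nat.pos_of_ne_zero h3
      simp [hv, hw, h, h1, h5]
  set G : Fin n → Bool → Polynomial ℤ := fun c y =>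
    if c = c₀ then (if y = v then 1 else 0)
    else (if y = w c then Polynomial.X else 1) with hG
  have hterm : ∀ b : Fin n → Bool,
      (if (Gb p E₁ b e).2 = true
        then (Polynomial.X : Polynomial ℤ) ^ (univ.filter fun c => b c = w c).card else 0)
        = ∏ c, G c (b c) := by
    intro b
    by_cases hb : b c₀ = v
    · rw [if_pos ((hcov b).mpr hb)]
      rw [← Finset.mul_prod_erase _ _ (Finset.mem_univ c₀)]
      have h0 : G c₀ (b c₀) = 1 := by simp [hG, hb]
      rw [h0, one_mul]
      have hco : ∀ c ∈ univ.erase c₀, G c (b c) =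
          if b c = w c then Polynomial.X else (1 : Polynomial ℤ) := by
        intro c hc
        simp [hG, (Finset.mem_erase.mp hc).1]
      rw [Finset.prod_congr rfl hco, Finset.prod_ite, Finset.prod_const, Finset.prod_const,
        one_pow, mul_one]
      have hc0 : c₀ ∉ univ.filter (fun c => b c = w c) := by
        simp only [Finset.mem_filter]
        rintro ⟨-, hcc⟩
        exact hvw (hb.symm.trans hcc)
      rw [Finset.filter_erase, Finset.erase_eq_of_notMem hc0]
    · rw [if_neg (fun hcon => hb ((hcov b).mp hcon))]
      symm
      apply Finset.prod_eq_zero (Finset.mem_univ c₀)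
      simp [hG, hb]
  rw [Finset.sum_congr rfl (fun b _ => hterm b), ← Fintype.prod_sum]
  have hsum : ∀ c : Fin n, (∑ y : Bool, G c y) =
      if c = c₀ then 1 else (1 + Polynomial.X) := by
    intro c
    rw [Fintype.sum_bool]
    by_cases h : c = c₀
    · subst h; cases hvv : v <;> simp [hG, hvv]
    · cases hww : w c <;> simp [hG, h, hww] <;> ring
  rw [Finset.prod_congr rfl (fun c _ => hsum c),
    ← Finset.mul_prod_erase _ _ (Finset.mem_univ c₀), if_pos rfl, one_mul,
    Finset.prod_congr rfl (fun c hc => if_neg (Finset.mem_erase.mp hc).1),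
    Finset.prod_const, Finset.card_erase_of_mem (Finset.mem_univ c₀),
    Finset.card_univ, Fintype.card_fin]

end
end StateSumAux

/-- **Theorem (Shimizu–Kawauchi).** For a knot projection `P` with `n ≥ 1` crossings, the
state sum of the warping crossing polynomials over all states is
`Z_P(t) = 2n(1 + t)^(n−1)`. -/
theorem state_sum_Xpoly (n : ℕ) (hn : 1 ≤ n) (p : ZMod (2 * n) → Fin n)
    (hp : IsProjection n p) :
    ∑ g ∈ statesFinset n hn p, XRaw n g
      = 2 * (n : Polynomial ℤ) * (1 + Polynomial.X) ^ (n - 1) := by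
  haveI : NeZero (2 * n) := ⟨by omega⟩
  classical
  choose E₁ E₂ hne hmem using hp
  have hE : ∀ c, E₁ c ≠ E₂ c ∧ ∀ e, p e = c ↔ e = E₁ c ∨ e = E₂ c :=
    fun c => ⟨hne c, hmem c⟩
  have himg : statesFinset n hn p = Finset.image (StateSumAux.Gb p E₁) Finset.univ := by
    ext g
    simp only [statesFinset, Finset.mem_filter, Finset.mem_univ, true_and, Finset.mem_image]
    constructor
    · rintro ⟨hg, hfst⟩
      exact ⟨fun c => (g (E₁ c)).2, (StateSumAux.state_eq_Gb hE hg hfst).symm⟩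
    · rintro ⟨b, -, rfl⟩
      exact ⟨StateSumAux.Gb_gauss hE b, fun e => rfl⟩
  rw [himg, Finset.sum_image (fun b _ b' _ h => StateSumAux.Gb_injective hE h)]
  unfold XRaw
  rw [Finset.sum_comm]
  have hkey : ∀ k ∈ Finset.range (2 * n),
      (∑ b : Fin n → Bool,
        if (StateSumAux.Gb p E₁ b (k : ZMod (2 * n))).2 = true
        then (Polynomial.X : Polynomial ℤ) ^
          dRaw n (StateSumAux.Gb p E₁ b) (k : ZMod (2 * n)) else 0)
        = (1 + Polynomial.X) ^ (n - 1) := by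
    intro k _
    rw [← StateSumAux.inner_sum hE ((k : ZMod (2 * n)))]
    apply Finset.sum_congr rfl
    intro b _
    rw [StateSumAux.dRaw_Gb hE]
  rw [Finset.sum_congr rfl hkey, Finset.sum_const, Finset.card_range, nsmul_eq_mul]
  push_cast
  ring
end

section
/- Let P be a knot projection with n ≥ 1 crossings. Then the sum of the warping polynomials W_D(t) over all 2^n states D of P equals 2n(1 + t)^n in ℤ[t]. -/
open Polynomial Finset
open scoped Classical

lemma bool_sum_ite (b : Bool) :
    (∑ x : Bool, if x ≠ b then (X : Polynomial ℤ) else 1) = 1 + X := by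
  cases b
  · simp [Fintype.sum_bool]; ring
  · simp [Fintype.sum_bool]

lemma sum_pow_card_ne {n : ℕ} (f : Fin n → Bool) :
    ∑ s : Fin n → Bool,
        (X : Polynomial ℤ) ^ (Finset.univ.filter fun c => s c ≠ f c).card
      = (1 + X) ^ n := by
  have h1 : ∀ s : Fin n → Bool,
      (X : Polynomial ℤ) ^ (Finset.univ.filter fun c => s c ≠ f c).card
        = ∏ c : Fin n, (if s c ≠ f c then (X : Polynomial ℤ) else 1) := by
    intro s
    rw [Finset.prod_ite, Finset.prod_const, Finset.prod_const, one_pow, mul_one]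
  simp_rw [h1]
  have h2 := Finset.prod_univ_sum (κ := fun _ : Fin n => Bool)
      (fun _ => (Finset.univ : Finset Bool))
      (fun c b => if b ≠ f c then (X : Polynomial ℤ) else 1)
  rw [Fintype.piFinset_univ] at h2
  rw [← h2]
  rw [Finset.prod_congr rfl fun c _ => bool_sum_ite (f c), Finset.prod_const,
    Finset.card_univ, Fintype.card_fin]

/-- For a knot projection `P` with `n ≥ 1` crossings, the sum of the warping polynomials
over all states is `2n(1 + t)^n`. -/
theorem state_sum_Wpoly (n : ℕ) (hn : 1 ≤ n) (p : ZMod (2 * n) → Fin n)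
    (hp : IsProjection n p) :
    ∑ g ∈ statesFinset n hn p, WRaw n g
      = 2 * (n : Polynomial ℤ) * (1 + Polynomial.X) ^ n := by
  haveI : NeZero (2 * n) := ⟨by omega⟩
  choose ε₁ ε₂ hne hiff using hp
  have hp1 : ∀ c, p (ε₁ c) = c := fun c => (hiff c (ε₁ c)).mpr (Or.inl rfl)
  have hp2 : ∀ c, p (ε₂ c) = c := fun c => (hiff c (ε₂ c)).mpr (Or.inr rfl)
  set enc : (Fin n → Bool) → ZMod (2 * n) → Fin n × Bool :=
    fun s e => (p e, if e = ε₁ (p e) then s (p e) else !s (p e)) with henc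
  have enc1 : ∀ s c, enc s (ε₁ c) = (c, s c) := by
    intro s c; simp [henc, hp1]
  have enc2 : ∀ s c, enc s (ε₂ c) = (c, !s c) := by
    intro s c
    simp only [henc, hp2]
    rw [if_neg (fun h => (hne c) h.symm)]
  have pos : ∀ (s : Fin n → Bool) (e : ZMod (2 * n)) c b,
      enc s e = (c, b) → e = ε₁ c ∨ e = ε₂ c := by
    intro s e c b h
    have : p e = c := by
      have := congrArg Prod.fst h
      simpa [henc] using this
    exact (hiff c e).mp this
  have enc_mem : ∀ s, enc s ∈ statesFinset n hn p := by
    intro s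
    unfold statesFinset
    rw [Finset.mem_filter]
    refine ⟨Finset.mem_univ _, ?_, fun e => rfl⟩
    intro c
    constructor
    · cases hsc : s c with
      | true =>
        refine ⟨ε₁ c, ?_, ?_⟩
        · show enc s (ε₁ c) = (c, true); rw [enc1, hsc]
        · intro e he
          have he' : enc s e = (c, true) := he
          rcases pos s e c true he' with h | h
          · exact h
          · rw [h, enc2, hsc] at he'
            simp at he'
      | false =>
        refine ⟨ε₂ c, ?_, ?_⟩
        · show enc s (ε₂ c) = (c, true); rw [enc2, hsc]; rfl
        · intro e he
          have he' : enc s e = (c, true) := he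
          rcases pos s e c true he' with h | h
          · rw [h, enc1, hsc] at he'; simp at he'
          · exact h
    · cases hsc : s c with
      | false =>
        refine ⟨ε₁ c, ?_, ?_⟩
        · show enc s (ε₁ c) = (c, false); rw [enc1, hsc]
        · intro e he
          have he' : enc s e = (c, false) := he
          rcases pos s e c false he' with h | h
          · exact h
          · rw [h, enc2, hsc] at he'; simp at he'
      | true =>
        refine ⟨ε₂ c, ?_, ?_⟩
        · show enc s (ε₂ c) = (c, false); rw [enc2, hsc]; rfl
        · intro e he
          have he' : enc s e = (c, false) := he
          rcases pos s e c false he' with h | h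
          · rw [h, enc1, hsc] at he'; simp at he'
          · exact h
  have enc_inj : ∀ s s' : Fin n → Bool, enc s = enc s' → s = s' := by
    intro s s' h
    funext c
    have := congrFun h (ε₁ c)
    rw [enc1, enc1] at this
    exact ((Prod.mk.injEq _ _ _ _).mp this).2
  have hstates : statesFinset n hn p = Finset.image enc Finset.univ := by
    ext g
    constructor
    · intro hg
      unfold statesFinset at hg
      rw [Finset.mem_filter] at hg
      obtain ⟨-, hgc, hfst⟩ := hg
      rw [Finset.mem_image]
      refine ⟨fun c => (g (ε₁ c)).2, Finset.mem_univ _, ?_⟩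
      have opp : ∀ c, (g (ε₂ c)).2 = !(g (ε₁ c)).2 := by
        intro c
        have hdiff : ∀ b : Bool, ¬((g (ε₁ c)).2 = b ∧ (g (ε₂ c)).2 = b) := by
          rintro b ⟨u1, u2⟩
          have h1 : g (ε₁ c) = (c, b) := Prod.ext ((hfst _).trans (hp1 c)) u1
          have h2 : g (ε₂ c) = (c, b) := Prod.ext ((hfst _).trans (hp2 c)) u2
          cases b with
          | true =>
            obtain ⟨e, -, hu⟩ := (hgc c).1
            exact hne c ((hu (ε₁ c) h1).trans (hu (ε₂ c) h2).symm)
          | false =>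
            obtain ⟨e, -, hu⟩ := (hgc c).2
            exact hne c ((hu (ε₁ c) h1).trans (hu (ε₂ c) h2).symm)
        cases hb1 : (g (ε₁ c)).2 <;> cases hb2 : (g (ε₂ c)).2
        · exact absurd ⟨hb1, hb2⟩ (hdiff false)
        · rfl
        · rfl
        · exact absurd ⟨hb1, hb2⟩ (hdiff true)
      funext e
      rcases (hiff (p e) e).mp rfl with hcase | hcase
      · rw [hcase]
        exact (enc1 (fun c => (g (ε₁ c)).2) (p e)).trans
          (Prod.ext ((hfst _).trans (hp1 _)) rfl).symm
      · rw [hcase]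
        exact (enc2 (fun c => (g (ε₁ c)).2) (p e)).trans
          (Prod.ext ((hfst _).trans (hp2 _)) (opp (p e))).symm
    · intro hg
      rw [Finset.mem_image] at hg
      obtain ⟨s, -, rfl⟩ := hg
      exact enc_mem s
  have hval : ∀ x e : ZMod (2 * n),
      e + (((x - e).val : ℕ) : ZMod (2 * n)) = x := by
    intro x e
    rw [ZMod.natCast_val, ZMod.cast_id]
    ring
  have key : ∀ (s : Fin n → Bool) (e : ZMod (2 * n)),
      dRaw n (enc s) e
        = (Finset.univ.filter fun c : Fin n =>
            s c ≠ decide ((ε₁ c - e).val < (ε₂ c - e).val)).card := by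
    intro s e
    unfold dRaw
    congr 1
    ext c
    simp only [Finset.mem_filter, Finset.mem_univ, true_and]
    have idx : ∀ j ∈ Finset.range (2 * n),
        ((e + (j : ZMod (2 * n))) - e).val = j := by
      intro j hj
      rw [add_sub_cancel_left, ZMod.val_natCast_of_lt (Finset.mem_range.mp hj)]
    have vne : (ε₁ c - e).val ≠ (ε₂ c - e).val := by
      intro h
      apply hne c
      calc ε₁ c = e + (((ε₁ c - e).val : ℕ) : ZMod (2 * n)) := (hval _ _).symm
        _ = e + (((ε₂ c - e).val : ℕ) : ZMod (2 * n)) := by rw [h]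
        _ = ε₂ c := hval _ _
    constructor
    · rintro ⟨j, hj, k, hk, hjk, hu, ho⟩
      rcases pos s _ _ _ hu with h1 | h1
      · rw [h1, enc1] at hu
        have hsc : s c = false := by simpa using hu
        rcases pos s _ _ _ ho with h2 | h2
        · rw [h2, enc1] at ho
          have : s c = true := by simpa using ho
          rw [hsc] at this; exact absurd this (by simp)
        · have v1 : (ε₁ c - e).val = j := by rw [← h1]; exact idx j hj
          have v2 : (ε₂ c - e).val = k := by rw [← h2]; exact idx k hk
          rw [hsc, v1, v2, decide_eq_true hjk]
          simp
      · rw [h1, enc2] at hu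
        have hsc : s c = true := by simpa using hu
        rcases pos s _ _ _ ho with h2 | h2
        · have v1 : (ε₂ c - e).val = j := by rw [← h1]; exact idx j hj
          have v2 : (ε₁ c - e).val = k := by rw [← h2]; exact idx k hk
          rw [hsc, v1, v2, decide_eq_false (by omega)]
          simp
        · rw [h2, enc2] at ho
          rw [hsc] at ho
          simp at ho
    · intro hsc
      cases h : s c with
      | false =>
        rw [h] at hsc
        have hlt : (ε₁ c - e).val < (ε₂ c - e).val := by
          by_contra hc
          exact hsc (decide_eq_false hc).symm
        refine ⟨(ε₁ c - e).val, Finset.mem_range.mpr (ZMod.val_lt _),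
                (ε₂ c - e).val, Finset.mem_range.mpr (ZMod.val_lt _), hlt, ?_, ?_⟩
        · rw [hval (ε₁ c) e, enc1, h]
        · rw [hval (ε₂ c) e, enc2, h]; rfl
      | true =>
        rw [h] at hsc
        have hnlt : ¬ (ε₁ c - e).val < (ε₂ c - e).val := fun hl =>
          hsc (decide_eq_true hl).symm
        have hlt : (ε₂ c - e).val < (ε₁ c - e).val := by omega
        refine ⟨(ε₂ c - e).val, Finset.mem_range.mpr (ZMod.val_lt _),
                (ε₁ c - e).val, Finset.mem_range.mpr (ZMod.val_lt _), hlt, ?_, ?_⟩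
        · rw [hval (ε₂ c) e, enc2, h]; rfl
        · rw [hval (ε₁ c) e, enc1, h]
  rw [hstates, Finset.sum_image (fun s _ s' _ h => enc_inj s s' h)]
  unfold WRaw
  rw [Finset.sum_comm]
  have step : ∀ k ∈ Finset.range (2 * n),
      (∑ s : Fin n → Bool,
        (X : Polynomial ℤ) ^ dRaw n (enc s) ((k : ℕ) : ZMod (2 * n)))
        = (1 + X) ^ n := by
    intro k _
    calc ∑ s : Fin n → Bool,
        (X : Polynomial ℤ) ^ dRaw n (enc s) ((k : ℕ) : ZMod (2 * n))
        = ∑ s : Fin n → Bool, (X : Polynomial ℤ) ^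
            (Finset.univ.filter fun c : Fin n =>
              s c ≠ decide ((ε₁ c - ((k : ℕ) : ZMod (2 * n))).val
                < (ε₂ c - ((k : ℕ) : ZMod (2 * n))).val)).card := by
          refine Finset.sum_congr rfl fun s _ => ?_
          rw [key s ((k : ℕ) : ZMod (2 * n))]
      _ = (1 + X) ^ n := sum_pow_card_ne _
  rw [Finset.sum_congr rfl step, Finset.sum_const, Finset.card_range, nsmul_eq_mul]
  push_cast
  ring
end

section
/- Let P be a knot projection with n ≥ 1 crossings, let e : ZMod (2*n) be a fixed position (edge), and let m be a natural number with 0 ≤ m ≤ n. Then the number of states D of P whose warping degree at e satisfies d e = m is exactly the binomial coefficient C(n, m). -/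
open Polynomial Finset
open scoped Classical

/-- For a knot projection `P` with `n ≥ 1` crossings, a fixed edge `e` and `m ≤ n`,
exactly `C(n, m)` of the states have warping degree `m` at `e`. -/
theorem card_states_with_warping_degree (n : ℕ) (hn : 1 ≤ n) (p : ZMod (2 * n) → Fin n)
    (hp : IsProjection n p) (e : ZMod (2 * n)) (m : ℕ) (hm : m ≤ n) :
    ((statesFinset n hn p).filter fun g => dRaw n g e = m).card = n.choose m := by
  haveI : NeZero (2 * n) := ⟨by omega⟩
  classical
  choose a b hab hchar using hp
  set idx : ZMod (2 * n) → ℕ := fun x => (x - e).val with hidxdef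
  have hadd : ∀ x, e + ((idx x : ℕ) : ZMod (2 * n)) = x := by
    intro x; simp only [hidxdef]; rw [ZMod.natCast_val, ZMod.cast_id]; ring
  have hlt : ∀ x, idx x < 2 * n := fun x => ZMod.val_lt _
  have huniq : ∀ (x : ZMod (2 * n)) (j : ℕ), j < 2 * n → e + (j : ZMod (2 * n)) = x → j = idx x := by
    intro x j hj h
    have h2 : (j : ZMod (2 * n)) = x - e := by rw [← h]; ring
    simp only [hidxdef]; rw [← h2, ZMod.val_cast_of_lt hj]
  have hinj : ∀ x y, idx x = idx y → x = y := by
    intro x y h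
    have := hadd x; rw [h, hadd y] at this; exact this.symm
  -- sorted pair of positions for each crossing
  set f₁ : Fin n → ZMod (2 * n) := fun c => if idx (a c) < idx (b c) then a c else b c with hf1def
  set f₂ : Fin n → ZMod (2 * n) := fun c => if idx (a c) < idx (b c) then b c else a c with hf2def
  have hne : ∀ c, idx (a c) ≠ idx (b c) := fun c h => hab c (hinj _ _ h)
  have hf : ∀ c, idx (f₁ c) < idx (f₂ c) := by
    intro c
    have := hne c
    simp only [hf1def, hf2def]
    split <;> omega
  have hfchar : ∀ c x, p x = c ↔ x = f₁ c ∨ x = f₂ c := by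
    intro c x
    by_cases h : idx (a c) < idx (b c) <;>
      simp only [hf1def, hf2def, h, if_true, if_false] <;> rw [hchar c x] <;> tauto
  have hf12 : ∀ c, f₁ c ≠ f₂ c := by
    intro c h; have := hf c; rw [h] at this; omega
  have hp1 : ∀ c, p (f₁ c) = c := fun c => (hfchar c _).2 (Or.inl rfl)
  have hp2 : ∀ c, p (f₂ c) = c := fun c => (hfchar c _).2 (Or.inr rfl)
  -- the code associated to a set S of "under-first" crossings
  set G : Finset (Fin n) → (ZMod (2 * n) → Fin n × Bool) :=
    fun S x => (p x, if x = f₁ (p x) then decide (p x ∉ S) else decide (p x ∈ S)) with hGdef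
  have hG1 : ∀ S c, G S (f₁ c) = (c, decide (c ∉ S)) := by
    intro S c; simp [hGdef, hp1 c]
  have hG2 : ∀ S c, G S (f₂ c) = (c, decide (c ∈ S)) := by
    intro S c; simp [hGdef, hp2 c, (hf12 c).symm]
  -- warping degree formula for any state
  have hd : ∀ g : ZMod (2 * n) → Fin n × Bool, IsGaussCode n g → (∀ x, (g x).1 = p x) →
      dRaw n g e = (univ.filter fun c => (g (f₁ c)).2 = false).card := by
    intro g hgc hgp
    unfold dRaw
    congr 1
    ext c
    simp only [Finset.mem_filter, Finset.mem_univ, true_and, Finset.mem_range]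
    constructor
    · rintro ⟨j, hj, k, hk, hjk, hu, ho⟩
      have hpx : p (e + (j : ZMod (2 * n))) = c := by rw [← hgp _, hu]
      have hpy : p (e + (k : ZMod (2 * n))) = c := by rw [← hgp _, ho]
      rcases (hfchar c _).1 hpx with h1 | h1
      · rw [← h1, hu]
      · exfalso
        rcases (hfchar c _).1 hpy with h2 | h2
        · have hjx : j = idx (f₂ c) := by
            have := huniq (e + (j : ZMod (2 * n))) j hj rfl; rw [h1] at this; exact this
          have hky : k = idx (f₁ c) := by
            have := huniq (e + (k : ZMod (2 * n))) k hk rfl; rw [h2] at this; exact this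
          have := hf c; omega
        · rw [h1] at hu; rw [h2] at ho; rw [ho] at hu; simp at hu
    · intro hfalse
      have hu : g (f₁ c) = (c, false) := by
        have := hgp (f₁ c); rw [hp1 c] at this
        exact Prod.ext this hfalse
      have ho : g (f₂ c) = (c, true) := by
        have h1 : (g (f₂ c)).1 = c := by rw [hgp (f₂ c), hp2 c]
        have h2 : (g (f₂ c)).2 = true := by
          by_contra h
          have hb : (g (f₂ c)).2 = false := by simpa using h
          have : g (f₂ c) = (c, false) := Prod.ext h1 hb
          have := (hgc c).2.unique this hu
          exact hf12 c this.symm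
        exact Prod.ext h1 h2
      exact ⟨idx (f₁ c), hlt _, idx (f₂ c), hlt _, hf c, by rw [hadd]; exact hu, by rw [hadd]; exact ho⟩
  -- G S is a valid state
  have hGstate : ∀ S : Finset (Fin n), IsGaussCode n (G S) ∧ ∀ x, (G S x).1 = p x := by
    intro S
    constructor
    · intro c
      have key : ∀ (v : Bool) (x : ZMod (2 * n)), G S x = (c, v) ↔
          (x = f₁ c ∧ decide (c ∉ S) = v) ∨ (x = f₂ c ∧ decide (c ∈ S) = v) := by
        intro v x
        constructor
        · intro h
          have hpx : p x = c := congrArg Prod.fst h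
          rcases (hfchar c x).1 hpx with h1 | h1
          · left; refine ⟨h1, ?_⟩; rw [h1, hG1 S c] at h; exact congrArg Prod.snd h
          · right; refine ⟨h1, ?_⟩; rw [h1, hG2 S c] at h; exact congrArg Prod.snd h
        · rintro (⟨rfl, hv⟩ | ⟨rfl, hv⟩)
          · rw [hG1 S c, hv]
          · rw [hG2 S c, hv]
      constructor
      · by_cases hc : c ∈ S
        · refine ⟨f₂ c, (key true _).2 (Or.inr ⟨rfl, by simp [hc]⟩), ?_⟩
          intro x hx
          rcases (key true x).1 hx with ⟨h1, h2⟩ | ⟨h1, _⟩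
          · simp [hc] at h2
          · exact h1
        · refine ⟨f₁ c, (key true _).2 (Or.inl ⟨rfl, by simp [hc]⟩), ?_⟩
          intro x hx
          rcases (key true x).1 hx with ⟨h1, _⟩ | ⟨h1, h2⟩
          · exact h1
          · simp [hc] at h2
      · by_cases hc : c ∈ S
        · refine ⟨f₁ c, (key false _).2 (Or.inl ⟨rfl, by simp [hc]⟩), ?_⟩
          intro x hx
          rcases (key false x).1 hx with ⟨h1, _⟩ | ⟨h1, h2⟩
          · exact h1
          · simp [hc] at h2
        · refine ⟨f₂ c, (key false _).2 (Or.inr ⟨rfl, by simp [hc]⟩), ?_⟩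
          intro x hx
          rcases (key false x).1 hx with ⟨h1, h2⟩ | ⟨h1, _⟩
          · simp [hc] at h2
          · exact h1
    · intro x; rfl
  have hGd : ∀ S : Finset (Fin n), dRaw n (G S) e = S.card := by
    intro S
    rw [hd (G S) (hGstate S).1 (hGstate S).2]
    congr 1
    ext c
    simp only [Finset.mem_filter, Finset.mem_univ, true_and]
    by_cases hc : c ∈ S <;> simp [hp1 c, hc, hG1 S c]
  -- the bijection
  have htarget : ∀ g', (g' ∈ (statesFinset n hn p).filter fun g => dRaw n g e = m) ↔
      ((IsGaussCode n g' ∧ ∀ x, (g' x).1 = p x) ∧ dRaw n g' e = m) := by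
    intro g'
    rw [Finset.mem_filter, statesFinset, Finset.mem_filter]
    simp only [Finset.mem_univ, true_and]
  have hcard : n.choose m = (Finset.powersetCard m (univ : Finset (Fin n))).card := by
    rw [Finset.card_powersetCard, Finset.card_univ, Fintype.card_fin]
  rw [hcard]
  refine (Finset.card_bij (fun S _ => G S) ?_ ?_ ?_).symm
  · intro S hS
    simp only [Finset.mem_powersetCard] at hS
    rw [htarget]
    exact ⟨⟨(hGstate S).1, (hGstate S).2⟩, by rw [hGd S, hS.2]⟩
  · intro S hS T hT hST
    ext c
    have h1 : G S (f₁ c) = G T (f₁ c) := congrFun hST (f₁ c)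
    rw [hG1 S c, hG1 T c] at h1
    have h2 := congrArg Prod.snd h1
    by_cases hc : c ∈ S <;> by_cases hc' : c ∈ T <;> simp [hc, hc'] at h2 ⊢
  · intro g hg
    rw [htarget] at hg
    obtain ⟨⟨hgc, hgp⟩, hgd⟩ := hg
    have hdiff : ∀ c (v : Bool), g (f₁ c) = (c, v) → g (f₂ c) = (c, !v) := by
      intro c v h1
      have h2 : (g (f₂ c)).1 = c := by rw [hgp, hp2]
      refine Prod.ext h2 ?_
      by_contra h
      have h3 : (g (f₂ c)).2 = v := by
        revert h
        cases v <;> cases hx : (g (f₂ c)).2 <;> simp [hx]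
      have h4 : g (f₂ c) = (c, v) := Prod.ext h2 h3
      have heq : f₁ c = f₂ c := by
        cases v
        · obtain ⟨w, hw, huni⟩ := (hgc c).2
          rw [huni _ h1, huni _ h4]
        · obtain ⟨w, hw, huni⟩ := (hgc c).1
          rw [huni _ h1, huni _ h4]
      exact hf12 c heq
    refine ⟨univ.filter fun c => (g (f₁ c)).2 = false, ?_, ?_⟩
    · simp only [Finset.mem_powersetCard]
      exact ⟨Finset.filter_subset _ _, by rw [← hd g hgc hgp, hgd]⟩
    · funext x
      have hfst : (G (univ.filter fun c => (g (f₁ c)).2 = false) x).1 = (g x).1 := by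
        rw [hgp]
      have hg1 : g (f₁ (p x)) = (p x, (g (f₁ (p x))).2) :=
        Prod.ext (by rw [hgp, hp1]) rfl
      refine Prod.ext hfst ?_
      simp only [hGdef, Finset.mem_filter, Finset.mem_univ, true_and]
      rcases (hfchar (p x) x).1 rfl with h1 | h1
      · rw [if_pos h1]
        conv_rhs => rw [h1]
        cases hb : (g (f₁ (p x))).2 <;> simp [hb]
      · have hne1 : x ≠ f₁ (p x) := fun h => hf12 (p x) (h.symm.trans h1)
        rw [if_neg hne1]
        conv_rhs => rw [h1]
        rw [show (g (f₂ (p x))).2 = !(g (f₁ (p x))).2 from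
          congrArg Prod.snd (hdiff (p x) _ hg1)]
        cases hb : (g (f₁ (p x))).2 <;> simp [hb]
end

section
/- Let D be an oriented knot diagram with n ≥ 1 crossings, modeled by a Gauss code g, and let D' be the diagram obtained from D by a crossing change at a crossing c₀. Then X_D(t) + X_{D'}(t) = A + B in ℤ[t]. -/
open Polynomial Finset

/-! ### Auxiliary lemmas -/

section AuxGeneral

lemma val_shift {m : ℕ} [NeZero m] (a e : ZMod m) (h : a ≠ e) :
    1 ≤ (a - e).val ∧ (a - (e + 1)).val = (a - e).val - 1 := by
  have h0 : a - e ≠ 0 := sub_ne_zero.mpr h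
  have h1 : 1 ≤ (a - e).val :=
    Nat.one_le_iff_ne_zero.mpr (fun hv => h0 ((ZMod.val_eq_zero _).1 hv))
  have hlt : (a - e).val < m := ZMod.val_lt _
  have hc : (((a - e).val - 1 : ℕ) : ZMod m) = a - (e + 1) := by
    rw [Nat.cast_sub h1, ZMod.natCast_rightInverse (a - e)]
    push_cast
    ring
  refine ⟨h1, ?_⟩
  rw [← hc, ZMod.val_cast_of_lt (by omega)]

lemma valNegOne {m : ℕ} (hm : 2 ≤ m) : (-1 : ZMod m).val = m - 1 := by
  haveI : NeZero m := ⟨by omega⟩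
  have h : ((m - 1 : ℕ) : ZMod m) = -1 := by
    rw [Nat.cast_sub (by omega)]
    simp
  rw [← h, ZMod.val_cast_of_lt (by omega)]

lemma card_filter_insert {α : Type*} [DecidableEq α] [Fintype α]
    (P Q : α → Prop) [DecidablePred P] [DecidablePred Q] (a : α)
    (h : ∀ x, Q x ↔ x = a ∨ P x) (ha : ¬ P a) :
    (Finset.univ.filter Q).card = (Finset.univ.filter P).card + 1 := by
  have he : Finset.univ.filter Q = insert a (Finset.univ.filter P) := by
    ext x
    simp only [Finset.mem_filter, Finset.mem_insert, Finset.mem_univ, true_and]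
    exact h x
  rw [he, Finset.card_insert_of_notMem (by simp [ha])]

lemma sum_range_zmod {M : Type*} [AddCommMonoid M] (m : ℕ) [NeZero m] (f : ZMod m → M) :
    ∑ k ∈ Finset.range m, f (k : ZMod m) = ∑ e : ZMod m, f e := by
  apply Finset.sum_nbij' (fun k => ((k : ℕ) : ZMod m)) (fun e => e.val)
  · intro a _; exact Finset.mem_univ _
  · intro a _; exact Finset.mem_range.2 (ZMod.val_lt a)
  · intro a ha; exact ZMod.val_cast_of_lt (Finset.mem_range.1 ha)
  · intro a _; exact ZMod.natCast_rightInverse a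
  · intro a _; rfl

lemma sum_ite_split {α M : Type*} [Fintype α] [AddCommMonoid M]
    (P : α → Prop) [DecidablePred P] (f g : α → M) :
    ∑ x : α, (if P x then f x else g x)
      = (∑ x : α, if P x then f x else 0) + ∑ x : α, if P x then 0 else g x := by
  rw [← Finset.sum_add_distrib]
  exact Finset.sum_congr rfl fun x _ => by split <;> simp

end AuxGeneral

namespace GaussCode

variable {n : ℕ} (D : GaussCode n)

lemma o_inj (c c' : Fin n) (h : D.o c = D.o c') : c = c' := by
  have h1 := D.g_o c
  rw [h, D.g_o c'] at h1
  have h2 : c' = c := by simpa using h1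
  exact h2.symm

lemma u_inj (c c' : Fin n) (h : D.u c = D.u c') : c = c' := by
  have h1 := D.g_u c
  rw [h, D.g_u c'] at h1
  have h2 : c' = c := by simpa using h1
  exact h2.symm

lemma d_o_succ (hn : 1 ≤ n) (c : Fin n) : D.d (D.o c + 1) = D.d (D.o c) + 1 := by
  haveI : NeZero (2 * n) := ⟨by omega⟩
  simp only [GaussCode.d]
  apply card_filter_insert _ _ c
  · intro c'
    by_cases hc : c' = c
    · subst hc
      simp only [eq_self_iff_true, true_or, iff_true]
      have h1 := val_shift (D.u c') (D.o c') (D.o_ne_u c' c').symm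
      have h2 : (D.o c' - (D.o c' + 1)) = -1 := by ring
      rw [h2, valNegOne (by omega), h1.2]
      have hlt : (D.u c' - D.o c').val < 2 * n := ZMod.val_lt _
      omega
    · have ho := val_shift (D.o c') (D.o c) (fun h => hc (D.o_inj c' c h))
      have hu := val_shift (D.u c') (D.o c) (D.o_ne_u c c').symm
      rw [ho.2, hu.2]
      constructor
      · intro hh
        exact Or.inr (by omega)
      · rintro (hh | hh)
        · exact absurd hh hc
        · omega
  · simp

lemma d_u_succ (hn : 1 ≤ n) (c : Fin n) : D.d (D.u c) = D.d (D.u c + 1) + 1 := by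
  haveI : NeZero (2 * n) := ⟨by omega⟩
  simp only [GaussCode.d]
  apply card_filter_insert _ _ c
  · intro c'
    by_cases hc : c' = c
    · subst hc
      simp only [eq_self_iff_true, true_or, iff_true]
      have h0 : D.o c' - D.u c' ≠ 0 := sub_ne_zero.mpr (D.o_ne_u c' c')
      have h1 : (D.o c' - D.u c').val ≠ 0 := fun hv => h0 ((ZMod.val_eq_zero _).1 hv)
      simpa using Nat.pos_of_ne_zero h1
    · have ho := val_shift (D.o c') (D.u c) (D.o_ne_u c' c)
      have hu := val_shift (D.u c') (D.u c) (fun h => hc (D.u_inj c' c h))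
      rw [ho.2, hu.2]
      constructor
      · intro hh
        exact Or.inr (by omega)
      · rintro (hh | hh)
        · exact absurd hh hc
        · omega
  · have h2 : (D.u c - (D.u c + 1)) = -1 := by ring
    have ho := val_shift (D.o c) (D.u c) (D.o_ne_u c c)
    have hlt : (D.o c - D.u c).val < 2 * n := ZMod.val_lt _
    rw [h2, valNegOne (by omega), ho.2]
    omega

lemma Xpoly_eq_over [NeZero (2 * n)] :
    D.Xpoly = ∑ e : ZMod (2 * n),
      if (D.g e).2 = true then (Polynomial.X : Polynomial ℤ) ^ D.d e else 0 := by
  rw [GaussCode.Xpoly, ← Finset.sum_filter]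
  apply Finset.sum_nbij' D.o (fun e => (D.g e).1)
  · intro c _
    simp [Finset.mem_filter, D.g_o c]
  · intro e _
    exact Finset.mem_univ _
  · intro c _
    simp [D.g_o c]
  · intro e he
    simp only [Finset.mem_filter, Finset.mem_univ, true_and] at he
    have hg : D.g e = ((D.g e).1, true) := by rw [← he]
    exact ((D.over_iff _ _).1 hg).symm
  · intro c _
    rfl

lemma under_eq [NeZero (2 * n)] (hn : 1 ≤ n) :
    (∑ e : ZMod (2 * n), if (D.g e).2 = true then (0 : Polynomial ℤ)
        else Polynomial.X ^ D.d e)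
      = Polynomial.X * ∑ e : ZMod (2 * n),
          if (D.g e).2 = true then (Polynomial.X : Polynomial ℤ) ^ D.d e else 0 := by
  set Ov := ∑ e : ZMod (2 * n),
    if (D.g e).2 = true then (Polynomial.X : Polynomial ℤ) ^ D.d e else 0 with hOv
  set Un := ∑ e : ZMod (2 * n),
    if (D.g e).2 = true then (0 : Polynomial ℤ) else Polynomial.X ^ D.d e with hUn
  set W := ∑ e : ZMod (2 * n), (Polynomial.X : Polynomial ℤ) ^ D.d e with hW
  have eqW : W = Ov + Un := by
    rw [hW, hOv, hUn, ← Finset.sum_add_distrib]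
    exact Finset.sum_congr rfl fun e _ => by split <;> simp
  have reidx : ∑ e : ZMod (2 * n), (Polynomial.X : Polynomial ℤ) ^ D.d (e + 1) = W := by
    rw [hW]
    exact Fintype.sum_equiv (Equiv.addRight 1) _ _ (fun x => rfl)
  have eshift : ∀ e : ZMod (2 * n),
      Polynomial.X * (Polynomial.X : Polynomial ℤ) ^ D.d (e + 1)
        = if (D.g e).2 = true then Polynomial.X ^ 2 * Polynomial.X ^ D.d e
          else Polynomial.X ^ D.d e := by
    intro e
    rcases hb : (D.g e).2 with _ | _
    · have he : e = D.u (D.g e).1 := (D.under_iff _ _).1 (by rw [← hb])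
      rw [if_neg (by simp [hb])]
      have hd := D.d_u_succ hn (D.g e).1
      rw [← he] at hd
      rw [hd]
      ring
    · have he : e = D.o (D.g e).1 := (D.over_iff _ _).1 (by rw [← hb])
      rw [if_pos (by simp [hb])]
      have hd := D.d_o_succ hn (D.g e).1
      rw [← he] at hd
      rw [hd]
      ring
  have eq2 : Polynomial.X * W = Polynomial.X ^ 2 * Ov + Un := by
    calc Polynomial.X * W
        = ∑ e : ZMod (2 * n), Polynomial.X * (Polynomial.X : Polynomial ℤ) ^ D.d (e + 1) := by
          rw [← reidx, Finset.mul_sum]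
      _ = ∑ e : ZMod (2 * n),
            (if (D.g e).2 = true then Polynomial.X ^ 2 * Polynomial.X ^ D.d e
              else Polynomial.X ^ D.d e) := Finset.sum_congr rfl fun e _ => eshift e
      _ = (∑ e : ZMod (2 * n), if (D.g e).2 = true
              then Polynomial.X ^ 2 * Polynomial.X ^ D.d e else 0)
            + ∑ e : ZMod (2 * n), if (D.g e).2 = true then 0
              else (Polynomial.X : Polynomial ℤ) ^ D.d e := sum_ite_split _ _ _
      _ = Polynomial.X ^ 2 * Ov + Un := by
          rw [hOv, hUn, Finset.mul_sum]
          congr 1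
          exact Finset.sum_congr rfl fun e _ => by split <;> simp
  have hx : (Polynomial.X - 1 : Polynomial ℤ) ≠ 0 := by
    intro h
    have := congrArg (Polynomial.eval 0) h
    simp at this
  have key : (Polynomial.X - 1) * Un = (Polynomial.X - 1) * (Polynomial.X * Ov) := by
    linear_combination eq2 - Polynomial.X * eqW
  exact mul_left_cancel₀ hx key

lemma W_eq [NeZero (2 * n)] (hn : 1 ≤ n) :
    (∑ e : ZMod (2 * n), (Polynomial.X : Polynomial ℤ) ^ D.d e)
      = (1 + Polynomial.X) * ∑ e : ZMod (2 * n),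
          if (D.g e).2 = true then (Polynomial.X : Polynomial ℤ) ^ D.d e else 0 := by
  have hsplit : (∑ e : ZMod (2 * n), (Polynomial.X : Polynomial ℤ) ^ D.d e)
      = (∑ e : ZMod (2 * n), if (D.g e).2 = true
          then (Polynomial.X : Polynomial ℤ) ^ D.d e else 0)
        + ∑ e : ZMod (2 * n), if (D.g e).2 = true then (0 : Polynomial ℤ)
          else Polynomial.X ^ D.d e := by
    rw [← Finset.sum_add_distrib]
    exact Finset.sum_congr rfl fun e _ => by split <;> simp
  rw [hsplit, D.under_eq hn]
  ring

end GaussCode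

/-- Crossing change formula: `X_D(t) + X_{D'}(t) = A + B`. -/
theorem crossing_change_sum
    (n : ℕ) (hn : 1 ≤ n) (D D' : GaussCode n) (c₀ : Fin n)
    (h1 : D'.g (D.o c₀) = (c₀, false))
    (h2 : D'.g (D.u c₀) = (c₀, true))
    (h3 : ∀ e : ZMod (2 * n), e ≠ D.o c₀ → e ≠ D.u c₀ → D'.g e = D.g e) :
    D.Xpoly + D'.Xpoly
      = (∑ k ∈ Finset.range (2 * n),
            if (D.o c₀ - (k : ZMod (2 * n))).val < (D.u c₀ - (k : ZMod (2 * n))).val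
            then (Polynomial.X : Polynomial ℤ) ^ D.d (k : ZMod (2 * n)) else 0)
        + ∑ k ∈ Finset.range (2 * n),
            if (D.u c₀ - (k : ZMod (2 * n))).val < (D.o c₀ - (k : ZMod (2 * n))).val
            then (Polynomial.X : Polynomial ℤ) ^ (D.d (k : ZMod (2 * n)) - 1) else 0 := by
  haveI : NeZero (2 * n) := ⟨by omega⟩
  have ho' : D'.o c₀ = D.u c₀ := ((D'.over_iff c₀ _).1 h2).symm
  have hu' : D'.u c₀ = D.o c₀ := ((D'.under_iff c₀ _).1 h1).symm
  have hoc : ∀ c : Fin n, c ≠ c₀ → D'.o c = D.o c := fun c hc =>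
    ((D'.over_iff c _).1 (by
      rw [h3 _ (fun h => hc (D.o_inj c c₀ h)) (D.o_ne_u c c₀)]
      exact D.g_o c)).symm
  have huc : ∀ c : Fin n, c ≠ c₀ → D'.u c = D.u c := fun c hc =>
    ((D'.under_iff c _).1 (by
      rw [h3 _ (D.o_ne_u c₀ c).symm (fun h => hc (D.u_inj c c₀ h))]
      exact D.g_u c)).symm
  have hvne : ∀ e : ZMod (2 * n), (D.u c₀ - e).val ≠ (D.o c₀ - e).val := by
    intro e h
    have h' := ZMod.val_injective _ h
    exact D.o_ne_u c₀ c₀ (sub_left_inj.mp h').symm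
  have hd' : ∀ e : ZMod (2 * n),
      ((D.o c₀ - e).val < (D.u c₀ - e).val → D'.d e = D.d e + 1)
      ∧ ((D.u c₀ - e).val < (D.o c₀ - e).val → D.d e = D'.d e + 1) := by
    intro e
    constructor
    · intro h
      simp only [GaussCode.d]
      apply card_filter_insert _ _ c₀
      · intro c
        by_cases hc : c = c₀
        · subst hc
          simp only [eq_self_iff_true, true_or, iff_true]
          rw [ho', hu']
          exact h
        · rw [hoc c hc, huc c hc]
          simp [hc]
      · omega
    · intro h
      simp only [GaussCode.d]
      apply card_filter_insert _ _ c₀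
      · intro c
        by_cases hc : c = c₀
        · subst hc
          simp only [eq_self_iff_true, true_or, iff_true]
          exact h
        · rw [hoc c hc, huc c hc]
          simp [hc]
      · rw [ho', hu']
        omega
  have hA : (∑ k ∈ Finset.range (2 * n),
        if (D.o c₀ - (k : ZMod (2 * n))).val < (D.u c₀ - (k : ZMod (2 * n))).val
        then (Polynomial.X : Polynomial ℤ) ^ D.d (k : ZMod (2 * n)) else 0)
      = ∑ e : ZMod (2 * n),
          if (D.o c₀ - e).val < (D.u c₀ - e).val
          then (Polynomial.X : Polynomial ℤ) ^ D.d e else 0 :=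
    sum_range_zmod (2 * n) (fun e =>
      if (D.o c₀ - e).val < (D.u c₀ - e).val
      then (Polynomial.X : Polynomial ℤ) ^ D.d e else 0)
  have hB : (∑ k ∈ Finset.range (2 * n),
        if (D.u c₀ - (k : ZMod (2 * n))).val < (D.o c₀ - (k : ZMod (2 * n))).val
        then (Polynomial.X : Polynomial ℤ) ^ (D.d (k : ZMod (2 * n)) - 1) else 0)
      = ∑ e : ZMod (2 * n),
          if (D.o c₀ - e).val < (D.u c₀ - e).val then 0
          else (Polynomial.X : Polynomial ℤ) ^ D'.d e := by
    rw [sum_range_zmod (2 * n) (fun e =>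
      if (D.u c₀ - e).val < (D.o c₀ - e).val
      then (Polynomial.X : Polynomial ℤ) ^ (D.d e - 1) else 0)]
    refine Finset.sum_congr rfl fun e _ => ?_
    by_cases h : (D.o c₀ - e).val < (D.u c₀ - e).val
    · rw [if_neg (by omega), if_pos h]
    · have hlt : (D.u c₀ - e).val < (D.o c₀ - e).val :=
        lt_of_le_of_ne (not_lt.1 h) (hvne e)
      rw [if_pos hlt, if_neg h, (hd' e).2 hlt]
      simp
  rw [hA, hB, D.Xpoly_eq_over, D'.Xpoly_eq_over]
  set A := ∑ e : ZMod (2 * n),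
    if (D.o c₀ - e).val < (D.u c₀ - e).val
    then (Polynomial.X : Polynomial ℤ) ^ D.d e else 0 with hAdef
  set B := ∑ e : ZMod (2 * n),
    if (D.o c₀ - e).val < (D.u c₀ - e).val then 0
    else (Polynomial.X : Polynomial ℤ) ^ D'.d e with hBdef
  have fact2 : (∑ e : ZMod (2 * n), (Polynomial.X : Polynomial ℤ) ^ D.d e)
      = A + Polynomial.X * B := by
    have step : (∑ e : ZMod (2 * n), (Polynomial.X : Polynomial ℤ) ^ D.d e)
        = ∑ e : ZMod (2 * n),
            (if (D.o c₀ - e).val < (D.u c₀ - e).val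
              then (Polynomial.X : Polynomial ℤ) ^ D.d e
              else Polynomial.X ^ (D'.d e + 1)) := by
      refine Finset.sum_congr rfl fun e _ => ?_
      by_cases h : (D.o c₀ - e).val < (D.u c₀ - e).val
      · rw [if_pos h]
      · have hlt : (D.u c₀ - e).val < (D.o c₀ - e).val :=
          lt_of_le_of_ne (not_lt.1 h) (hvne e)
        rw [if_neg h, (hd' e).2 hlt]
    rw [step, sum_ite_split, hAdef, hBdef, Finset.mul_sum]
    congr 1
    exact Finset.sum_congr rfl fun e _ => by split <;> simp [pow_succ, mul_comm]
  have fact3 : (∑ e : ZMod (2 * n), (Polynomial.X : Polynomial ℤ) ^ D'.d e)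
      = Polynomial.X * A + B := by
    have step : (∑ e : ZMod (2 * n), (Polynomial.X : Polynomial ℤ) ^ D'.d e)
        = ∑ e : ZMod (2 * n),
            (if (D.o c₀ - e).val < (D.u c₀ - e).val
              then (Polynomial.X : Polynomial ℤ) ^ (D.d e + 1)
              else Polynomial.X ^ D'.d e) := by
      refine Finset.sum_congr rfl fun e _ => ?_
      by_cases h : (D.o c₀ - e).val < (D.u c₀ - e).val
      · rw [if_pos h, (hd' e).1 h]
      · rw [if_neg h]
    rw [step, sum_ite_split, hAdef, hBdef, Finset.mul_sum]
    congr 1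
    exact Finset.sum_congr rfl fun e _ => by split <;> simp [pow_succ, mul_comm]
  have h1X : (1 + Polynomial.X : Polynomial ℤ) ≠ 0 := by
    intro h
    have := congrArg (Polynomial.eval 0) h
    simp at this
  apply mul_left_cancel₀ h1X
  calc (1 + Polynomial.X)
        * ((∑ e : ZMod (2 * n),
            if (D.g e).2 = true then (Polynomial.X : Polynomial ℤ) ^ D.d e else 0)
          + ∑ e : ZMod (2 * n),
            if (D'.g e).2 = true then (Polynomial.X : Polynomial ℤ) ^ D'.d e else 0)
      = (∑ e : ZMod (2 * n), (Polynomial.X : Polynomial ℤ) ^ D.d e)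
        + ∑ e : ZMod (2 * n), (Polynomial.X : Polynomial ℤ) ^ D'.d e := by
        rw [D.W_eq hn, D'.W_eq hn]; ring
    _ = (A + Polynomial.X * B) + (Polynomial.X * A + B) := by rw [fact2, fact3]
    _ = (1 + Polynomial.X) * (A + B) := by ring
end

section
/- Let D be an oriented knot diagram with n ≥ 1 crossings, modeled by a Gauss code g, and let D' be the diagram obtained from D by a crossing change at a crossing c₀. Then (1 + t) · X_D(t) = A + t · B and (1 + t) · X_{D'}(t) = t · A + B in ℤ[t]. -/
open Polynomial Finset

namespace GCaux

open GaussCode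

variable {n : ℕ}

lemma zmod_sub_one_val {m : ℕ} [NeZero m] (a : ZMod m) (ha : a ≠ 0) :
    (a - 1).val = a.val - 1 := by
  have h1 : a.val ≠ 0 := by simpa [ZMod.val_eq_zero] using ha
  have hlt : a.val < m := ZMod.val_lt a
  have key : a - 1 = ((a.val - 1 : ℕ) : ZMod m) := by
    rw [Nat.cast_sub (by omega), ZMod.natCast_rightInverse a, Nat.cast_one]
  rw [key, ZMod.val_cast_of_lt (by omega)]

lemma zmod_neg_one_val {m : ℕ} [NeZero m] (hm : 1 < m) : ((0 : ZMod m) - 1).val = m - 1 := by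
  have key : (0 : ZMod m) - 1 = ((m - 1 : ℕ) : ZMod m) := by
    rw [Nat.cast_sub (by omega), ZMod.natCast_self, Nat.cast_one]
  rw [key, ZMod.val_cast_of_lt (by omega)]

lemma val_pos {m : ℕ} [NeZero m] (a : ZMod m) (ha : a ≠ 0) : 0 < a.val := by
  have h1 : a.val ≠ 0 := by simpa [ZMod.val_eq_zero] using ha
  omega

lemma val_inj {m : ℕ} [NeZero m] {a b : ZMod m} (h : a.val = b.val) : a = b := by
  have := ZMod.natCast_rightInverse a
  rw [← this, h, ZMod.natCast_rightInverse b]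

variable (D : GaussCode n)

lemma g_o (c : Fin n) : D.g (D.o c) = (c, true) := (D.over_iff c _).mpr rfl

lemma g_u (c : Fin n) : D.g (D.u c) = (c, false) := (D.under_iff c _).mpr rfl

lemma o_ne_u (c c' : Fin n) : D.o c ≠ D.u c' := by
  intro h
  have h1 := g_o D c
  rw [h, g_u] at h1
  simp at h1

lemma o_inj {c c' : Fin n} (h : D.o c = D.o c') : c = c' := by
  have h1 := g_o D c
  rw [h, g_o] at h1
  exact (Prod.mk.injEq _ _ _ _ ▸ h1).1.symm

lemma u_inj {c c' : Fin n} (h : D.u c = D.u c') : c = c' := by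
  have h1 := g_u D c
  rw [h, g_u] at h1
  exact (Prod.mk.injEq _ _ _ _ ▸ h1).1.symm

end GCaux

namespace GCaux

variable {n : ℕ} (D : GaussCode n)

lemma d_o_succ [NeZero (2 * n)] (c : Fin n) : D.d (D.o c + 1) = D.d (D.o c) + 1 := by
  classical
  have hm : 1 < 2 * n := by have := NeZero.ne (2 * n); omega
  have hset : (Finset.univ.filter fun c' : Fin n =>
        (D.u c' - (D.o c + 1)).val < (D.o c' - (D.o c + 1)).val)
      = insert c (Finset.univ.filter fun c' : Fin n =>
        (D.u c' - D.o c).val < (D.o c' - D.o c).val) := by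
    ext c'
    simp only [mem_filter, mem_univ, true_and, mem_insert]
    by_cases hc : c' = c
    · subst hc
      refine iff_of_true ?_ (Or.inl rfl)
      have e1 : D.o c' - (D.o c' + 1) = 0 - 1 := by ring
      have e2 : D.u c' - (D.o c' + 1) = (D.u c' - D.o c') - 1 := by ring
      have hne : D.u c' - D.o c' ≠ 0 := sub_ne_zero.mpr (Ne.symm (o_ne_u D c' c'))
      rw [e1, e2, zmod_neg_one_val hm, zmod_sub_one_val _ hne]
      have hl := ZMod.val_lt (D.u c' - D.o c')
      have hp := val_pos _ hne
      omega
    · simp only [hc, false_or]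
      have e2 : D.u c' - (D.o c + 1) = (D.u c' - D.o c) - 1 := by ring
      have e3 : D.o c' - (D.o c + 1) = (D.o c' - D.o c) - 1 := by ring
      have hu0 : D.u c' - D.o c ≠ 0 := sub_ne_zero.mpr (Ne.symm (o_ne_u D c c'))
      have ho0 : D.o c' - D.o c ≠ 0 := sub_ne_zero.mpr (fun h => hc (o_inj D h))
      rw [e2, e3, zmod_sub_one_val _ hu0, zmod_sub_one_val _ ho0]
      have hp1 := val_pos _ hu0
      have hp2 := val_pos _ ho0
      omega
  unfold GaussCode.d
  rw [hset, card_insert_of_notMem]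
  simp [mem_filter, sub_self]

lemma d_u_pred [NeZero (2 * n)] (c : Fin n) : D.d (D.u c) = D.d (D.u c + 1) + 1 := by
  classical
  have hm : 1 < 2 * n := by have := NeZero.ne (2 * n); omega
  have hset : (Finset.univ.filter fun c' : Fin n =>
        (D.u c' - D.u c).val < (D.o c' - D.u c).val)
      = insert c (Finset.univ.filter fun c' : Fin n =>
        (D.u c' - (D.u c + 1)).val < (D.o c' - (D.u c + 1)).val) := by
    ext c'
    simp only [mem_filter, mem_univ, true_and, mem_insert]
    by_cases hc : c' = c
    · subst hc
      refine iff_of_true ?_ (Or.inl rfl)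
      have hne : D.o c' - D.u c' ≠ 0 := sub_ne_zero.mpr (o_ne_u D c' c')
      rw [sub_self]
      simpa using val_pos _ hne
    · simp only [hc, false_or]
      have e2 : D.u c' - (D.u c + 1) = (D.u c' - D.u c) - 1 := by ring
      have e3 : D.o c' - (D.u c + 1) = (D.o c' - D.u c) - 1 := by ring
      have hu0 : D.u c' - D.u c ≠ 0 := sub_ne_zero.mpr (fun h => hc (u_inj D h))
      have ho0 : D.o c' - D.u c ≠ 0 := sub_ne_zero.mpr (o_ne_u D c' c)
      rw [e2, e3, zmod_sub_one_val _ hu0, zmod_sub_one_val _ ho0]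
      have hp1 := val_pos _ hu0
      have hp2 := val_pos _ ho0
      omega
  unfold GaussCode.d
  rw [hset, card_insert_of_notMem]
  simp only [mem_filter, mem_univ, true_and, not_lt]
  have e1 : D.u c - (D.u c + 1) = 0 - 1 := by ring
  have e3 : D.o c - (D.u c + 1) = (D.o c - D.u c) - 1 := by ring
  have ho0 : D.o c - D.u c ≠ 0 := sub_ne_zero.mpr (o_ne_u D c c)
  rw [e1, e3, zmod_neg_one_val hm, zmod_sub_one_val _ ho0]
  have hl := ZMod.val_lt (D.o c - D.u c)
  omega

end GCaux

namespace GCaux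

lemma sum_range_zmod {m : ℕ} [NeZero m] (f : ZMod m → Polynomial ℤ) :
    ∑ k ∈ Finset.range m, f (k : ZMod m) = ∑ e : ZMod m, f e := by
  refine Finset.sum_nbij' (fun k => (k : ZMod m)) (fun e => e.val) ?_ ?_ ?_ ?_ ?_
  · intro k _; exact mem_univ _
  · intro e _; exact mem_range.mpr (ZMod.val_lt e)
  · intro k hk; exact ZMod.val_natCast_of_lt (mem_range.mp hk)
  · intro e _; exact ZMod.natCast_rightInverse e
  · intro k _; rfl

lemma key {n : ℕ} (D : GaussCode n) [NeZero (2 * n)] :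
    (1 + (X : Polynomial ℤ)) * D.Xpoly = ∑ e : ZMod (2 * n), (X : Polynomial ℤ) ^ D.d e := by
  classical
  set p : ZMod (2 * n) → Prop := fun e => (D.g e).2 = true with hp
  have h_over : ∀ e : ZMod (2 * n), p e → e = D.o (D.g e).1 := by
    intro e he
    exact (D.over_iff (D.g e).1 e).mp (by rw [← he])
  have h_under : ∀ e : ZMod (2 * n), ¬ p e → e = D.u (D.g e).1 := by
    intro e he
    have hb : (D.g e).2 = false := by simpa [hp] using he
    exact (D.under_iff (D.g e).1 e).mp (by rw [← hb])
  set O := ∑ e ∈ univ.filter p, (X : Polynomial ℤ) ^ D.d e with hO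
  set U := ∑ e ∈ univ.filter (fun e => ¬ p e), (X : Polynomial ℤ) ^ D.d e with hU
  set O' := ∑ e ∈ univ.filter p, (X : Polynomial ℤ) ^ D.d (e + 1) with hO'
  set U' := ∑ e ∈ univ.filter (fun e => ¬ p e), (X : Polynomial ℤ) ^ D.d (e + 1) with hU'
  have hOX : O' = X * O := by
    rw [hO, hO', Finset.mul_sum]
    refine Finset.sum_congr rfl fun e he => ?_
    have hpe : p e := (mem_filter.mp he).2
    rw [h_over e hpe, d_o_succ D]
    ring
  have hUX : U = X * U' := by
    rw [hU, hU', Finset.mul_sum]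
    refine Finset.sum_congr rfl fun e he => ?_
    have hpe : ¬ p e := (mem_filter.mp he).2
    rw [h_under e hpe, d_u_pred D]
    ring
  have hsplit : O + U = ∑ e : ZMod (2 * n), (X : Polynomial ℤ) ^ D.d e :=
    Finset.sum_filter_add_sum_filter_not univ p _
  have hsplit' : O' + U' = ∑ e : ZMod (2 * n), (X : Polynomial ℤ) ^ D.d (e + 1) :=
    Finset.sum_filter_add_sum_filter_not univ p _
  have hre : ∑ e : ZMod (2 * n), (X : Polynomial ℤ) ^ D.d (e + 1)
      = ∑ e : ZMod (2 * n), (X : Polynomial ℤ) ^ D.d e :=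
    Fintype.sum_equiv (Equiv.addRight 1) _ _ (fun e => rfl)
  have hOU : O + U = O' + U' := by rw [hsplit, hsplit', hre]
  have hcomb : O + X * U' = X * O + U' := by rw [← hUX, ← hOX]; exact hOU
  have hne : (X - 1 : Polynomial ℤ) ≠ 0 := by simpa using Polynomial.X_sub_C_ne_zero (1 : ℤ)
  have hU'O : U' = O := mul_left_cancel₀ hne (by linear_combination hcomb)
  have hXpoly : D.Xpoly = O := by
    rw [hO]
    unfold GaussCode.Xpoly
    refine Finset.sum_nbij' (fun c => D.o c) (fun e => (D.g e).1) ?_ ?_ ?_ ?_ ?_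
    · intro c _; simp [mem_filter, hp, g_o D c]
    · intro e _; exact mem_univ _
    · intro c _; simp [g_o D c]
    · intro e he; exact (h_over e (mem_filter.mp he).2).symm
    · intro c _; rfl
  rw [hXpoly, ← hsplit, hUX, hU'O]
  ring

end GCaux

/-- `(1 + t)⬝X_D(t) = A + t⬝B` and `(1 + t)⬝X_{D'}(t) = t⬝A + B`. -/
theorem crossing_change_AB
    (n : ℕ) (hn : 1 ≤ n) (D D' : GaussCode n) (c₀ : Fin n)
    (h1 : D'.g (D.o c₀) = (c₀, false))
    (h2 : D'.g (D.u c₀) = (c₀, true))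
    (h3 : ∀ e : ZMod (2 * n), e ≠ D.o c₀ → e ≠ D.u c₀ → D'.g e = D.g e) :
    ((1 + Polynomial.X) * D.Xpoly
      = (∑ k ∈ Finset.range (2 * n),
            if (D.o c₀ - (k : ZMod (2 * n))).val < (D.u c₀ - (k : ZMod (2 * n))).val
            then (Polynomial.X : Polynomial ℤ) ^ D.d (k : ZMod (2 * n)) else 0)
        + Polynomial.X *
          ∑ k ∈ Finset.range (2 * n),
            if (D.u c₀ - (k : ZMod (2 * n))).val < (D.o c₀ - (k : ZMod (2 * n))).val
            then (Polynomial.X : Polynomial ℤ) ^ (D.d (k : ZMod (2 * n)) - 1) else 0)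
    ∧
    ((1 + Polynomial.X) * D'.Xpoly
      = Polynomial.X *
          (∑ k ∈ Finset.range (2 * n),
            if (D.o c₀ - (k : ZMod (2 * n))).val < (D.u c₀ - (k : ZMod (2 * n))).val
            then (Polynomial.X : Polynomial ℤ) ^ D.d (k : ZMod (2 * n)) else 0)
        + ∑ k ∈ Finset.range (2 * n),
            if (D.u c₀ - (k : ZMod (2 * n))).val < (D.o c₀ - (k : ZMod (2 * n))).val
            then (Polynomial.X : Polynomial ℤ) ^ (D.d (k : ZMod (2 * n)) - 1) else 0) := by
  classical
  haveI : NeZero (2 * n) := ⟨by omega⟩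
  have ho'₀ : D'.o c₀ = D.u c₀ := ((D'.over_iff c₀ _).mp h2).symm
  have hu'₀ : D'.u c₀ = D.o c₀ := ((D'.under_iff c₀ _).mp h1).symm
  have ho' : ∀ c : Fin n, c ≠ c₀ → D'.o c = D.o c := by
    intro c hc
    have hg : D'.g (D.o c) = (c, true) := by
      rw [h3 _ (fun h => hc (GCaux.o_inj D h)) (GCaux.o_ne_u D c c₀)]
      exact GCaux.g_o D c
    exact ((D'.over_iff c _).mp hg).symm
  have hu' : ∀ c : Fin n, c ≠ c₀ → D'.u c = D.u c := by
    intro c hc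
    have hg : D'.g (D.u c) = (c, false) := by
      rw [h3 _ (Ne.symm (GCaux.o_ne_u D c₀ c)) (fun h => hc (GCaux.u_inj D h))]
      exact GCaux.g_u D c
    exact ((D'.under_iff c _).mp hg).symm
  have hvalne : ∀ e : ZMod (2 * n), (D.o c₀ - e).val ≠ (D.u c₀ - e).val := by
    intro e h
    exact GCaux.o_ne_u D c₀ c₀ (sub_left_injective (GCaux.val_inj h))
  have hdA : ∀ e : ZMod (2 * n), (D.o c₀ - e).val < (D.u c₀ - e).val → D'.d e = D.d e + 1 := by
    intro e hA
    have hset : (univ.filter fun c : Fin n => (D'.u c - e).val < (D'.o c - e).val)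
        = insert c₀ (univ.filter fun c : Fin n => (D.u c - e).val < (D.o c - e).val) := by
      ext c
      simp only [mem_filter, mem_univ, true_and, mem_insert]
      by_cases hc : c = c₀
      · subst hc
        refine iff_of_true ?_ (Or.inl rfl)
        rw [ho'₀, hu'₀]
        exact hA
      · rw [ho' c hc, hu' c hc]
        simp [hc]
    unfold GaussCode.d
    rw [hset, card_insert_of_notMem]
    simp only [mem_filter, mem_univ, true_and, not_lt]
    omega
  have hdB : ∀ e : ZMod (2 * n), (D.u c₀ - e).val < (D.o c₀ - e).val → D.d e = D'.d e + 1 := by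
    intro e hB
    have hset : (univ.filter fun c : Fin n => (D.u c - e).val < (D.o c - e).val)
        = insert c₀ (univ.filter fun c : Fin n => (D'.u c - e).val < (D'.o c - e).val) := by
      ext c
      simp only [mem_filter, mem_univ, true_and, mem_insert]
      by_cases hc : c = c₀
      · subst hc
        exact iff_of_true hB (Or.inl rfl)
      · rw [ho' c hc, hu' c hc]
        simp [hc]
    unfold GaussCode.d
    rw [hset, card_insert_of_notMem]
    simp only [mem_filter, mem_univ, true_and, not_lt]
    rw [ho'₀, hu'₀]
    omega
  constructor
  · rw [GCaux.key D, ← GCaux.sum_range_zmod (fun e => (X : Polynomial ℤ) ^ D.d e),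
      Finset.mul_sum, ← Finset.sum_add_distrib]
    refine Finset.sum_congr rfl fun k _ => ?_
    by_cases hA : (D.o c₀ - (k : ZMod (2 * n))).val < (D.u c₀ - (k : ZMod (2 * n))).val
    · have hB : ¬ (D.u c₀ - (k : ZMod (2 * n))).val < (D.o c₀ - (k : ZMod (2 * n))).val := by
        omega
      rw [if_pos hA, if_neg hB, mul_zero, add_zero]
    · have hB : (D.u c₀ - (k : ZMod (2 * n))).val < (D.o c₀ - (k : ZMod (2 * n))).val := by
        have := hvalne (k : ZMod (2 * n)); omega
      rw [if_neg hA, if_pos hB, zero_add]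
      have hpos : 0 < D.d (k : ZMod (2 * n)) := by
        refine Finset.card_pos.mpr ⟨c₀, ?_⟩
        simp only [mem_filter, mem_univ, true_and]
        exact hB
      have hd : D.d (k : ZMod (2 * n)) - 1 + 1 = D.d (k : ZMod (2 * n)) := by omega
      calc (X : Polynomial ℤ) ^ D.d (k : ZMod (2 * n))
          = X ^ (D.d (k : ZMod (2 * n)) - 1 + 1) := by rw [hd]
        _ = X * X ^ (D.d (k : ZMod (2 * n)) - 1) := by ring
  · rw [GCaux.key D', ← GCaux.sum_range_zmod (fun e => (X : Polynomial ℤ) ^ D'.d e),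
      Finset.mul_sum, ← Finset.sum_add_distrib]
    refine Finset.sum_congr rfl fun k _ => ?_
    by_cases hA : (D.o c₀ - (k : ZMod (2 * n))).val < (D.u c₀ - (k : ZMod (2 * n))).val
    · have hB : ¬ (D.u c₀ - (k : ZMod (2 * n))).val < (D.o c₀ - (k : ZMod (2 * n))).val := by
        omega
      rw [if_pos hA, if_neg hB, add_zero, hdA _ hA]
      ring
    · have hB : (D.u c₀ - (k : ZMod (2 * n))).val < (D.o c₀ - (k : ZMod (2 * n))).val := by
        have := hvalne (k : ZMod (2 * n)); omega
      rw [if_neg hA, if_pos hB, mul_zero, zero_add]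
      have hd := hdB _ hB
      have : D.d (k : ZMod (2 * n)) - 1 = D'.d (k : ZMod (2 * n)) := by omega
      rw [this]
end

section
/- Let D be an oriented knot diagram with n ≥ 1 crossings, modeled by a Gauss code g, and let −D be the diagram D with the orientation reversed. Then X_{−D}(t) = t^(n−1) · X_D(t⁻¹); that is, for every k with 0 ≤ k ≤ n−1, the coefficient of t^k in X_{−D}(t) equals the coefficient of t^(n−1−k) in X_D(t) (X_{−D} is the reflection of X_D at degree n−1). -/
open Polynomial Finset

/-- The warping crossing polynomial of the orientation-reversed diagram `−D` is the
reflection of that of `D` at degree `n − 1`: `X_{−D}(t) = t^(n−1) X_D(t⁻¹)`. -/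
theorem Xpoly_reverse_orientation
    (n : ℕ) (hn : 1 ≤ n) (D Dm : GaussCode n)
    (h : ∀ e : ZMod (2 * n), Dm.g e = D.g (-e)) :
    ∀ k : ℕ, k ≤ n - 1 → Dm.Xpoly.coeff k = D.Xpoly.coeff (n - 1 - k) := by
  haveI : NeZero (2 * n) := ⟨by omega⟩
  have hgo : ∀ c : Fin n, D.g (D.o c) = (c, true) := fun c => (D.over_iff c _).mpr rfl
  have hgu : ∀ c : Fin n, D.g (D.u c) = (c, false) := fun c => (D.under_iff c _).mpr rfl
  have ho : ∀ c, Dm.o c = -(D.o c) := fun c =>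
    ((Dm.over_iff c _).mp (by rw [h, neg_neg]; exact hgo c)).symm
  have hu : ∀ c, Dm.u c = -(D.u c) := fun c =>
    ((Dm.under_iff c _).mp (by rw [h, neg_neg]; exact hgu c)).symm
  have huo : ∀ c c' : Fin n, D.u c' ≠ D.o c := by
    intro c c' hne
    have := hgu c'
    rw [hne, hgo c] at this
    simpa using this
  have hoinj : ∀ c c' : Fin n, D.o c' = D.o c → c' = c := by
    intro c c' hne
    have := hgo c'
    rw [hne, hgo c] at this
    have h' := congrArg Prod.fst this
    simp only [Prod.fst] at h'
    exact h'.symm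
  have key : ∀ c : Fin n, D.d (D.o c) ≤ n - 1 ∧ Dm.d (Dm.o c) = n - 1 - D.d (D.o c) := by
    intro c
    set A := univ.filter (fun c' : Fin n => (D.u c' - D.o c).val < (D.o c' - D.o c).val)
      with hA
    have hAsub : A ⊆ univ.erase c := by
      intro c' hc'
      simp only [hA, mem_filter] at hc'
      refine mem_erase.mpr ⟨?_, mem_univ _⟩
      rintro rfl
      rw [sub_self, ZMod.val_zero] at hc'
      exact Nat.not_lt_zero _ hc'.2
    have hcard_erase : (univ.erase c).card = n - 1 := by
      rw [card_erase_of_mem (mem_univ c), card_univ, Fintype.card_fin]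
    have hB : (univ.filter fun c' : Fin n =>
        (Dm.u c' - Dm.o c).val < (Dm.o c' - Dm.o c).val) = (univ.erase c) \ A := by
      ext c'
      simp only [mem_filter, mem_univ, true_and, and_true, mem_sdiff, mem_erase, hA, ho, hu]
      have e1 : -(D.u c') - -(D.o c) = -(D.u c' - D.o c) := by ring
      have e2 : -(D.o c') - -(D.o c) = -(D.o c' - D.o c) := by ring
      rw [e1, e2]
      rcases eq_or_ne c' c with rfl | hne
      · simp [sub_self]
      · have h1 : D.u c' - D.o c ≠ 0 := sub_ne_zero.mpr (huo c c')
        have h2 : D.o c' - D.o c ≠ 0 := sub_ne_zero.mpr fun heq => hne (hoinj c c' heq)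
        have h3 : D.u c' - D.o c ≠ D.o c' - D.o c := fun heq =>
          huo c' c' (by have := sub_left_inj.mp heq; exact this)
        have h3' : (D.u c' - D.o c).val ≠ (D.o c' - D.o c).val :=
          fun heq => h3 (ZMod.val_injective _ heq)
        rw [ZMod.neg_val, ZMod.neg_val, if_neg h1, if_neg h2]
        have l1 : (D.u c' - D.o c).val < 2 * n := ZMod.val_lt _
        have l2 : (D.o c' - D.o c).val < 2 * n := ZMod.val_lt _
        have l1' : 0 < (D.u c' - D.o c).val :=
          Nat.pos_of_ne_zero fun hz => h1 ((ZMod.val_eq_zero _).mp hz)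
        have l2' : 0 < (D.o c' - D.o c).val :=
          Nat.pos_of_ne_zero fun hz => h2 ((ZMod.val_eq_zero _).mp hz)
        constructor
        · intro hlt
          exact ⟨hne, by omega⟩
        · intro ⟨_, hlt⟩
          omega
    constructor
    · calc A.card ≤ (univ.erase c).card := card_le_card hAsub
        _ = n - 1 := hcard_erase
    · show (univ.filter fun c' : Fin n =>
        (Dm.u c' - Dm.o c).val < (Dm.o c' - Dm.o c).val).card = n - 1 - A.card
      rw [hB, card_sdiff_of_subset hAsub, hcard_erase]
  intro k hk
  unfold GaussCode.Xpoly
  rw [Polynomial.finset_sum_coeff, Polynomial.finset_sum_coeff]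
  refine Finset.sum_congr rfl fun c _ => ?_
  rw [Polynomial.coeff_X_pow, Polynomial.coeff_X_pow]
  obtain ⟨h1, h2⟩ := key c
  by_cases hc : k = Dm.d (Dm.o c)
  · rw [if_pos hc, if_pos (by omega)]
  · rw [if_neg hc, if_neg (by omega)]
end
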